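/- arXiv:2004.13196 — 7 statements merged into one kernel-verified Lean document; each statement's English description precedes it below -/
import Mathlib

section
/- For every integer n ≥ 3 and every integer k ≥ 1, the k-th moment of distance satisfies I(n,k) = (2n/π) · ∫_0^{π/n} sec²(θ₁) · ( ∫_{θ₁}^{π/2} u^k · cos(u) · sin(u) du ) dθ₁. -/
open MeasureTheory

open Real Set intervalIntegral in
lemma key_subst (k : ℕ) {t : ℝ} (ht0 : 0 ≤ t) (ht : t ≤ π / 3) :
    (∫ η in (0:ℝ)..(π/2), (arccos (cos t * cos η)) ^ k * cos η * sin η)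
      = (1 / cos t ^ 2) * ∫ u in t..(π/2), u ^ k * cos u * sin u := by
  have hpi := pi_pos
  rcases eq_or_lt_of_le ht0 with rfl | htpos
  · have he : Set.EqOn (fun η => (arccos (cos 0 * cos η)) ^ k * cos η * sin η)
        (fun u => u ^ k * cos u * sin u) (uIcc (0:ℝ) (π/2)) := by
      intro η hη
      rw [uIcc_of_le (by positivity)] at hη
      simp only [cos_zero, one_mul]
      rw [arccos_cos hη.1 (hη.2.trans (by linarith))]
    rw [intervalIntegral.integral_congr he]
    norm_num
  · set c := cos t with hc
    have hcpos : 0 < c := cos_pos_of_mem_Ioo ⟨by linarith, by linarith⟩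
    have hc1 : c < 1 := by
      have := cos_lt_cos_of_nonneg_of_le_pi le_rfl (by linarith) htpos
      simpa [hc] using this
    have hxlt : ∀ η : ℝ, c * cos η < 1 := fun η => by
      nlinarith [neg_one_le_cos η, cos_le_one η]
    have hxgt : ∀ η : ℝ, -1 < c * cos η := fun η => by
      nlinarith [neg_one_le_cos η, cos_le_one η]
    have hs : ∀ η : ℝ, 0 < Real.sqrt (1 - (c * cos η) ^ 2) := fun η => by
      apply Real.sqrt_pos.2
      nlinarith [hxlt η, hxgt η]
    have hderiv : ∀ η ∈ uIcc (0:ℝ) (π/2),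
        HasDerivAt (fun η => arccos (c * cos η))
          (c * sin η / Real.sqrt (1 - (c * cos η) ^ 2)) η := by
      intro η _
      have h1 : HasDerivAt (fun η => c * cos η) (c * (-sin η)) η :=
        (Real.hasDerivAt_cos η).const_mul c
      have h2 := (Real.hasDerivAt_arccos (ne_of_gt (hxgt η)) (ne_of_lt (hxlt η))).comp η h1
      refine h2.congr_deriv ?_
      ring
    have hcont : ContinuousOn (fun η => c * sin η / Real.sqrt (1 - (c * cos η) ^ 2))
        (uIcc (0:ℝ) (π/2)) := by
      apply ContinuousOn.div
      · exact (continuous_const.mul Real.continuous_sin).continuousOn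
      · exact (Real.continuous_sqrt.comp (by continuity)).continuousOn
      · exact fun η _ => ne_of_gt (hs η)
    have hg : Continuous (fun u : ℝ => (1 / c ^ 2) * (u ^ k * cos u * sin u)) := by
      continuity
    have := intervalIntegral.integral_comp_smul_deriv hderiv hcont hg
    have hL : (∫ η in (0:ℝ)..(π/2), (arccos (c * cos η)) ^ k * cos η * sin η)
        = ∫ η in (0:ℝ)..(π/2),
            (c * sin η / Real.sqrt (1 - (c * cos η) ^ 2)) •
              ((fun u : ℝ => (1 / c ^ 2) * (u ^ k * cos u * sin u)) ∘
                (fun η => arccos (c * cos η))) η := by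
      apply intervalIntegral.integral_congr
      intro η hη
      rw [uIcc_of_le (by positivity)] at hη
      have hcosη : 0 ≤ cos η := cos_nonneg_of_mem_Icc ⟨by linarith [hη.1], hη.2⟩
      have hx1 : -1 ≤ c * cos η := (hxgt η).le
      have hx2 : c * cos η ≤ 1 := (hxlt η).le
      simp only [Function.comp_apply, smul_eq_mul]
      rw [Real.cos_arccos hx1 hx2, Real.sin_arccos]
      have hsne := (hs η).ne'
      have hcne := hcpos.ne'
      field_simp
      rw [mul_div_cancel_right₀ _ (by rw [← mul_pow]; exact hsne)]
    rw [hL, this]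
    have ha : arccos (c * cos 0) = t := by
      rw [cos_zero, mul_one, hc, arccos_cos ht0 (by linarith)]
    have hb : arccos (c * cos (π/2)) = π/2 := by
      rw [cos_pi_div_two, mul_zero, arccos_zero]
    rw [ha, hb, intervalIntegral.integral_const_mul]

/-- The `k`-th moment of distance on the homogeneous lens space `L(n;1)`,
expressed as an explicit integral over a fundamental domain in join coordinates. -/
noncomputable def momentI (n k : ℕ) : ℝ :=
  ((n : ℝ) ^ 2 / (2 * Real.pi ^ 2)) *
    ∫ θ₂ in (-(Real.pi / n))..(Real.pi / n),
      ∫ θ₁ in (-(Real.pi / n))..(Real.pi / n),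
        ∫ η in (0 : ℝ)..(Real.pi / 2),
          (Real.arccos (Real.cos θ₁ * Real.cos η)) ^ k * Real.cos η * Real.sin η

noncomputable def Faux (k : ℕ) (θ : ℝ) : ℝ :=
  (1 / Real.cos θ ^ 2) * ∫ u in |θ|..(Real.pi / 2), u ^ k * Real.cos u * Real.sin u

open Real Set intervalIntegral in
theorem moment_eq_double_integral (n k : ℕ) (hn : 3 ≤ n) (hk : 1 ≤ k) :
    momentI n k =
      (2 * n / Real.pi) *
        ∫ θ₁ in (0 : ℝ)..(Real.pi / n),
          (1 / (Real.cos θ₁) ^ 2) *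
            ∫ u in θ₁..(Real.pi / 2), u ^ k * Real.cos u * Real.sin u := by
  have hpi := Real.pi_pos
  have hn3 : (3:ℝ) ≤ (n:ℝ) := by exact_mod_cast hn
  have hn0 : (0:ℝ) < (n:ℝ) := by linarith
  set a := π / (n:ℝ) with ha
  have hapos : 0 < a := by positivity
  have ha3 : a ≤ π / 3 := by
    rw [ha]
    gcongr
  -- continuity of the primitive
  have hh : Continuous (fun u : ℝ => u ^ k * cos u * sin u) := by continuity
  have hP : Continuous (fun x : ℝ => ∫ u in x..(π/2), u ^ k * cos u * sin u) := by
    rw [continuous_iff_continuousAt]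
    intro x
    exact (intervalIntegral.integral_hasDerivAt_left (hh.intervalIntegrable _ _)
      (hh.stronglyMeasurableAtFilter _ _) hh.continuousAt).continuousAt
  have hcosne : ∀ θ ∈ Icc (-a) a, cos θ ≠ 0 := by
    intro θ hθ
    have h1 : -a ≤ θ := hθ.1
    have h2 : θ ≤ a := hθ.2
    exact (cos_pos_of_mem_Ioo ⟨by linarith, by linarith⟩).ne'
  have hFcont : ContinuousOn (Faux k) (Icc (-a) a) := by
    apply ContinuousOn.mul
    · exact ContinuousOn.div continuousOn_const
        ((Real.continuous_cos.pow 2).continuousOn)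
        (fun θ hθ => pow_ne_zero 2 (hcosne θ hθ))
    · exact (hP.comp continuous_abs).continuousOn
  have hI1 : IntervalIntegrable (Faux k) volume (-a) 0 :=
    (hFcont.mono (by rw [uIcc_of_le (by linarith)]; exact Icc_subset_Icc le_rfl hapos.le)).intervalIntegrable
  have hI2 : IntervalIntegrable (Faux k) volume 0 a :=
    (hFcont.mono (by rw [uIcc_of_le hapos.le]; exact Icc_subset_Icc (by linarith) le_rfl)).intervalIntegrable
  have hEq1 : Set.EqOn
      (fun θ₁ => ∫ η in (0:ℝ)..(π/2), (arccos (cos θ₁ * cos η)) ^ k * cos η * sin η)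
      (Faux k) (uIcc (-a) a) := by
    intro θ hθ
    rw [uIcc_of_le (by linarith)] at hθ
    have h2 : |θ| ≤ π / 3 := (abs_le.2 ⟨hθ.1, hθ.2⟩).trans ha3
    have := key_subst k (abs_nonneg θ) h2
    simp only [Real.cos_abs] at this
    simpa [Faux] using this
  have hneg : (∫ θ in (-a)..(0:ℝ), Faux k θ) = ∫ θ in (0:ℝ)..a, Faux k θ := by
    have h := intervalIntegral.integral_comp_neg (a := (0:ℝ)) (b := a) (Faux k)
    simp only [neg_zero] at h
    rw [← h]
    apply intervalIntegral.integral_congr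
    intro θ _
    simp [Faux, Real.cos_neg, abs_neg]
  have hsplit : (∫ θ in (-a)..a, Faux k θ)
      = (∫ θ in (-a)..(0:ℝ), Faux k θ) + ∫ θ in (0:ℝ)..a, Faux k θ :=
    (intervalIntegral.integral_add_adjacent_intervals hI1 hI2).symm
  have hfinal : (∫ θ in (0:ℝ)..a, Faux k θ)
      = ∫ θ₁ in (0:ℝ)..a, (1 / (cos θ₁) ^ 2) * ∫ u in θ₁..(π/2), u ^ k * cos u * sin u := by
    apply intervalIntegral.integral_congr
    intro θ hθ
    rw [uIcc_of_le hapos.le] at hθ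
    simp [Faux, abs_of_nonneg hθ.1]
  unfold momentI
  rw [intervalIntegral.integral_const, smul_eq_mul, ← ha,
    intervalIntegral.integral_congr hEq1, hsplit, hneg, hfinal]
  rw [ha]
  field_simp
  ring
end

section
/- For every integer n ≥ 3, the first moment of distance is I(n,1) = π/(2n) + ((n−2)/4) · tan(π/n). -/
open MeasureTheory

noncomputable def Gfun (c u : ℝ) : ℝ :=
  -(u^2/2 * Real.arccos (c*u)) - (Real.arcsin (c*u) - c*u*Real.sqrt (1-(c*u)^2))/(4*c^2)

lemma hasDerivAt_Gfun (c : ℝ) (hc : 0 < c) (hc1 : c ≤ 1) (u : ℝ) (hu0 : 0 < u) (hu1 : u < 1) :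
    HasDerivAt (Gfun c) (-(u * Real.arccos (c*u))) u := by
  have hcu0 : 0 < c * u := mul_pos hc hu0
  have hcu1 : c * u < 1 := by nlinarith
  have hne1 : c * u ≠ 1 := ne_of_lt hcu1
  have hnen1 : c * u ≠ -1 := by nlinarith
  have hs : 0 < 1 - (c*u)^2 := by nlinarith
  set s := Real.sqrt (1 - (c*u)^2) with hs_def
  have hspos : 0 < s := Real.sqrt_pos.mpr hs
  have hssq : s^2 = 1 - (c*u)^2 := Real.sq_sqrt hs.le
  -- derivative of u ↦ c*u
  have hlin : HasDerivAt (fun u : ℝ => c * u) c u := by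
    simpa using (hasDerivAt_id u).const_mul c
  have harccos : HasDerivAt (fun u : ℝ => Real.arccos (c*u)) (-(1 / s) * c) u :=
    (Real.hasDerivAt_arccos hnen1 hne1).comp u hlin
  have harcsin : HasDerivAt (fun u : ℝ => Real.arcsin (c*u)) ((1 / s) * c) u :=
    (Real.hasDerivAt_arcsin hnen1 hne1).comp u hlin
  have hsqrt : HasDerivAt (fun u : ℝ => Real.sqrt (1-(c*u)^2))
      (1 / (2 * s) * (-(2 * (c*u)) * c)) u := by
    have hinner : HasDerivAt (fun u : ℝ => 1-(c*u)^2) (-(2 * (c*u)) * c) u := by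
      have := (hlin.pow 2).const_sub 1
      refine this.congr_deriv (Eq.symm ?_)
      ring
    exact (Real.hasDerivAt_sqrt (ne_of_gt hs)).comp u hinner
  have h1 : HasDerivAt (fun u : ℝ => u^2/2 * Real.arccos (c*u))
      (u * Real.arccos (c*u) + u^2/2 * (-(1 / s) * c)) u := by
    have hp : HasDerivAt (fun u : ℝ => u^2/2) u u := by
      have := (hasDerivAt_pow 2 u).div_const 2
      refine this.congr_deriv (Eq.symm ?_); push_cast; ring
    exact hp.mul harccos
  have h2 : HasDerivAt (fun u : ℝ => c*u*Real.sqrt (1-(c*u)^2))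
      (c * s + (c*u) * (1 / (2 * s) * (-(2 * (c*u)) * c))) u := by
    exact hlin.mul hsqrt
  have h3 : HasDerivAt (Gfun c)
      (-(u * Real.arccos (c*u) + u^2/2 * (-(1 / s) * c)) -
        ((1 / s) * c - (c * s + (c*u) * (1 / (2 * s) * (-(2 * (c*u)) * c))))/(4*c^2)) u :=
    (h1.neg).sub ((harcsin.sub h2).div_const (4*c^2))
  convert h3 using 1
  have hcne : c ≠ 0 := ne_of_gt hc
  have hsne : s ≠ 0 := ne_of_gt hspos
  field_simp
  linear_combination (-2) * hssq

lemma inner_integral (c : ℝ) (hc : 0 < c) (hc1 : c ≤ 1) :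
    ∫ η in (0:ℝ)..(Real.pi/2), Real.arccos (c * Real.cos η) * Real.cos η * Real.sin η
      = Real.arccos c / 2 + (Real.arcsin c - c * Real.sqrt (1 - c^2)) / (4*c^2) := by
  have hle : (0:ℝ) ≤ Real.pi/2 := by positivity
  have hcont : ContinuousOn (fun η => Gfun c (Real.cos η)) (Set.Icc 0 (Real.pi/2)) := by
    apply Continuous.continuousOn
    unfold Gfun
    have := Real.continuous_arccos
    have := Real.continuous_arcsin
    fun_prop
  have hderiv : ∀ η ∈ Set.Ioo (0:ℝ) (Real.pi/2),
      HasDerivAt (fun η => Gfun c (Real.cos η))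
        (Real.arccos (c * Real.cos η) * Real.cos η * Real.sin η) η := by
    intro η hη
    have h1 : 0 < Real.cos η := Real.cos_pos_of_mem_Ioo ⟨by linarith [hη.1, Real.pi_pos], hη.2⟩
    have h2 : Real.cos η < 1 := by
      have := Real.cos_lt_cos_of_nonneg_of_le_pi (le_refl 0) (by linarith [hη.2, Real.pi_pos]) hη.1
      simpa using this
    have hG := (hasDerivAt_Gfun c hc hc1 (Real.cos η) h1 h2).comp η (Real.hasDerivAt_cos η)
    refine hG.congr_deriv (Eq.symm ?_)
    ring
  have hint : IntervalIntegrable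
      (fun η => Real.arccos (c * Real.cos η) * Real.cos η * Real.sin η) volume 0 (Real.pi/2) := by
    apply Continuous.intervalIntegrable
    have := Real.continuous_arccos
    have := Real.continuous_arcsin
    fun_prop
  have := intervalIntegral.integral_eq_sub_of_hasDerivAt_of_le hle hcont hderiv hint
  rw [this]
  unfold Gfun
  simp [Real.cos_pi_div_two, Real.arcsin_zero, Real.arccos, mul_one]
  ring

noncomputable def gfun (θ : ℝ) : ℝ :=
  Real.arccos (Real.cos θ) / 2 +
    (Real.arcsin (Real.cos θ) - Real.cos θ * Real.sqrt (1 - Real.cos θ ^ 2)) / (4 * Real.cos θ ^ 2)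

lemma gfun_even (θ : ℝ) : gfun (-θ) = gfun θ := by
  unfold gfun; rw [Real.cos_neg]

lemma mid_integral (a : ℝ) (ha : 0 < a) (ha2 : a < Real.pi/2) :
    ∫ θ in (0:ℝ)..a, gfun θ = a^2/4 + (Real.pi/2 - a) * Real.tan a / 4 := by
  have hcont : ContinuousOn gfun (Set.Icc 0 a) := by
    intro θ hθ
    have hcos : 0 < Real.cos θ := by
      apply Real.cos_pos_of_mem_Ioo
      constructor <;> [linarith [hθ.1, Real.pi_pos]; linarith [hθ.2]]
    have := Real.continuous_arccos
    have := Real.continuous_arcsin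
    apply ContinuousWithinAt.add
    · exact Continuous.continuousWithinAt (by fun_prop)
    · apply ContinuousWithinAt.div
      · exact Continuous.continuousWithinAt (by fun_prop)
      · exact Continuous.continuousWithinAt (by fun_prop)
      · positivity
  have hderiv : ∀ θ ∈ Set.Ioo (0:ℝ) a,
      HasDerivAt (fun θ => θ^2/4 + (Real.pi/2 - θ) * Real.tan θ / 4) (gfun θ) θ := by
    intro θ hθ
    have hθπ : θ < Real.pi / 2 := lt_trans hθ.2 ha2
    have hcos : 0 < Real.cos θ := Real.cos_pos_of_mem_Ioo
      ⟨by linarith [hθ.1, Real.pi_pos], hθπ⟩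
    have hsin : 0 ≤ Real.sin θ := Real.sin_nonneg_of_nonneg_of_le_pi hθ.1.le
      (by linarith [Real.pi_pos, hθπ])
    have h1 : HasDerivAt (fun θ : ℝ => θ^2/4) (θ/2) θ := by
      have := (hasDerivAt_pow 2 θ).div_const 4
      refine this.congr_deriv (Eq.symm ?_); push_cast; ring
    have h2 : HasDerivAt (fun θ : ℝ => (Real.pi/2 - θ) * Real.tan θ / 4)
        (((-1) * Real.tan θ + (Real.pi/2 - θ) * (1 / Real.cos θ ^ 2)) / 4) θ := by
      exact (((hasDerivAt_id θ).const_sub (Real.pi/2)).mul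
        (Real.hasDerivAt_tan (ne_of_gt hcos))).div_const 4
    have h := h1.add h2
    refine h.congr_deriv (Eq.symm ?_)
    unfold gfun
    rw [Real.arccos_cos hθ.1.le (by linarith [Real.pi_pos]),
      show Real.arcsin (Real.cos θ) = Real.pi/2 - θ by
        rw [Real.arcsin_eq_pi_div_two_sub_arccos,
          Real.arccos_cos hθ.1.le (by linarith [Real.pi_pos])],
      show Real.sqrt (1 - Real.cos θ ^ 2) = Real.sin θ by
        rw [show (1:ℝ) - Real.cos θ ^ 2 = Real.sin θ ^ 2 by
              nlinarith [Real.sin_sq_add_cos_sq θ],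
          Real.sqrt_sq hsin]]
    rw [Real.tan_eq_sin_div_cos]
    field_simp
    ring
  have hcontH : ContinuousOn (fun θ => θ^2/4 + (Real.pi/2 - θ) * Real.tan θ / 4)
      (Set.Icc 0 a) := by
    intro θ hθ
    have hcos : Real.cos θ ≠ 0 := by
      have : 0 < Real.cos θ := Real.cos_pos_of_mem_Ioo
        ⟨by linarith [hθ.1, Real.pi_pos], by linarith [hθ.2]⟩
      positivity
    have htan : ContinuousAt Real.tan θ := Real.continuousAt_tan.mpr hcos
    exact ContinuousAt.continuousWithinAt (by fun_prop)
  have hint : IntervalIntegrable gfun volume 0 a := by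
    apply ContinuousOn.intervalIntegrable
    rwa [Set.uIcc_of_le ha.le]
  rw [intervalIntegral.integral_eq_sub_of_hasDerivAt_of_le ha.le hcontH hderiv hint]
  simp [Real.tan_zero]

lemma gfun_continuousAt {θ : ℝ} (h1 : -(Real.pi/2) < θ) (h2 : θ < Real.pi/2) :
    ContinuousAt gfun θ := by
  have hcos : 0 < Real.cos θ := Real.cos_pos_of_mem_Ioo ⟨h1, h2⟩
  have := Real.continuous_arccos
  have := Real.continuous_arcsin
  apply ContinuousAt.add
  · exact Continuous.continuousAt (by fun_prop)
  · apply ContinuousAt.div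
    · exact Continuous.continuousAt (by fun_prop)
    · exact Continuous.continuousAt (by fun_prop)
    · positivity

lemma sym_integral (a : ℝ) (ha : 0 < a) (ha2 : a < Real.pi/2) :
    ∫ θ in (-a)..a, gfun θ = 2 * ∫ θ in (0:ℝ)..a, gfun θ := by
  have hcont : ContinuousOn gfun (Set.Icc (-a) a) := fun θ hθ =>
    (gfun_continuousAt (by linarith [hθ.1]) (by linarith [hθ.2])).continuousWithinAt
  have h1 : IntervalIntegrable gfun volume (-a) 0 := by
    apply ContinuousOn.intervalIntegrable
    apply hcont.mono
    rw [Set.uIcc_of_le (by linarith : (-a:ℝ) ≤ 0)]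
    exact Set.Icc_subset_Icc le_rfl ha.le
  have h2 : IntervalIntegrable gfun volume 0 a := by
    apply ContinuousOn.intervalIntegrable
    apply hcont.mono
    rw [Set.uIcc_of_le ha.le]
    exact Set.Icc_subset_Icc (by linarith) le_rfl
  rw [← intervalIntegral.integral_add_adjacent_intervals h1 h2]
  have : (∫ θ in (-a)..(0:ℝ), gfun θ) = ∫ θ in (0:ℝ)..a, gfun θ := by
    rw [show (0:ℝ) = -0 by ring, ← intervalIntegral.integral_comp_neg gfun]
    simp [gfun_even]
  rw [this]; ring

theorem first_moment (n : ℕ) (hn : 3 ≤ n) :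
    momentI n 1 = Real.pi / (2 * n) + ((n : ℝ) - 2) / 4 * Real.tan (Real.pi / n) := by

  have hn3 : (3:ℝ) ≤ (n:ℝ) := by exact_mod_cast hn
  have hπ : 0 < Real.pi := Real.pi_pos
  set a : ℝ := Real.pi / n with ha_def
  have ha : 0 < a := by positivity
  have ha3 : a ≤ Real.pi / 3 := by
    apply div_le_div_of_nonneg_left hπ.le (by norm_num) hn3
  have ha2 : a < Real.pi / 2 := lt_of_le_of_lt ha3 (by linarith)
  have key : (∫ θ₁ in (-a)..a,
      ∫ η in (0:ℝ)..(Real.pi/2),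
        Real.arccos (Real.cos θ₁ * Real.cos η) * Real.cos η * Real.sin η)
      = 2 * (a^2/4 + (Real.pi/2 - a) * Real.tan a / 4) := by
    rw [intervalIntegral.integral_congr (g := gfun) ?_, sym_integral a ha ha2,
      mid_integral a ha ha2]
    intro θ₁ hθ₁
    rw [Set.uIcc_of_le (by linarith : -a ≤ a)] at hθ₁
    have hc : 0 < Real.cos θ₁ :=
      Real.cos_pos_of_mem_Ioo ⟨by linarith [hθ₁.1], by linarith [hθ₁.2]⟩
    have := inner_integral (Real.cos θ₁) hc (Real.cos_le_one θ₁)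
    simpa [gfun] using this
  unfold momentI
  simp only [pow_one, ← ha_def, key, intervalIntegral.integral_const, smul_eq_mul]
  have hn0 : (n:ℝ) ≠ 0 := by positivity
  have hπ0 : Real.pi ≠ 0 := ne_of_gt hπ
  rw [ha_def]
  field_simp
  ring
end

section
/- For every integer n ≥ 3 and every integer k ≥ 2, the moments of distance satisfy the recurrence I(n,k) = −(k(k−1)/4) · I(n,k−2) + (1/(k+1)) · (π/n)^k + (n/(2π)) · ((π/2)^k − (π/n)^k) · tan(π/n). -/
open MeasureTheory

namespace MomentRecAux

open intervalIntegral Real Set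

noncomputable def I1 (m : ℕ) (θ : ℝ) : ℝ :=
  ∫ η in (0:ℝ)..(π/2), (arccos (Real.cos θ * Real.cos η)) ^ m * Real.cos η * Real.sin η

lemma contI1 (m : ℕ) : Continuous (I1 m) := by
  apply intervalIntegral.continuous_parametric_intervalIntegral_of_continuous' (μ := volume)
    ?_ 0 (π/2)
  have h := Real.continuous_arccos
  fun_prop

lemma I1_even (m : ℕ) (θ : ℝ) : I1 m (-θ) = I1 m θ := by
  simp [I1]

lemma even_int {f : ℝ → ℝ} (hf : Continuous f) (he : ∀ θ, f (-θ) = f θ) (a : ℝ) :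
    ∫ x in (-a)..a, f x = 2 * ∫ x in (0:ℝ)..a, f x := by
  have h1 : ∫ x in (-a)..(0:ℝ), f x = ∫ x in (0:ℝ)..a, f x := by
    have := intervalIntegral.integral_comp_neg (a := (0:ℝ)) (b := a) (f := f)
    simp only [neg_zero] at this
    rw [← this]
    exact intervalIntegral.integral_congr fun x _ => he x
  rw [← intervalIntegral.integral_add_adjacent_intervals (b := (0:ℝ))
    (hf.intervalIntegrable _ _) (hf.intervalIntegrable _ _), h1, two_mul]

lemma I1_eq (m : ℕ) {θ : ℝ} (h0 : 0 ≤ θ) (h1 : θ < π / 2) :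
    I1 m θ = (Real.cos θ)⁻¹ ^ 2 * ∫ t in θ..(π/2), t ^ m * Real.sin t * Real.cos t := by
  have hπ := Real.pi_pos
  have hc : 0 < Real.cos θ := Real.cos_pos_of_mem_Ioo ⟨by linarith, h1⟩
  set c := Real.cos θ with hcdef
  have step1 : I1 m θ = ∫ u in (0:ℝ)..1, (arccos (c * u)) ^ m * u := by
    have key := intervalIntegral.integral_comp_smul_deriv (a := (0:ℝ)) (b := π/2)
      (f := Real.cos) (f' := fun η => -Real.sin η)
      (g := fun u => (arccos (c * u)) ^ m * u)
      (fun x _ => Real.hasDerivAt_cos x) (by fun_prop)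
      (by have := Real.continuous_arccos; fun_prop)
    simp only [Real.cos_zero, Real.cos_pi_div_two] at key
    rw [intervalIntegral.integral_symm, ← key, ← intervalIntegral.integral_neg]
    exact intervalIntegral.integral_congr fun x _ => by
      simp [Function.comp, smul_eq_mul]; ring
  have step2 : (∫ u in (0:ℝ)..1, (arccos (c * u)) ^ m * u)
      = (c)⁻¹ ^ 2 * ∫ t in θ..(π/2), t ^ m * Real.sin t * Real.cos t := by
    have key := intervalIntegral.integral_comp_smul_deriv (a := π/2) (b := θ)
      (f := fun t => Real.cos t / c) (f' := fun t => -Real.sin t / c)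
      (g := fun u => (arccos (c * u)) ^ m * u)
      (fun x _ => (Real.hasDerivAt_cos x).div_const c) (by fun_prop)
      (by have := Real.continuous_arccos; fun_prop)
    simp only [Real.cos_pi_div_two, zero_div, div_self hc.ne'] at key
    rw [show Real.cos θ / c = 1 from div_self hc.ne'] at key
    rw [← key, intervalIntegral.integral_symm, ← intervalIntegral.integral_const_mul,
      ← intervalIntegral.integral_neg]
    apply intervalIntegral.integral_congr
    intro x hx
    rw [uIcc_of_le (by linarith)] at hx
    have hx0 : 0 ≤ x := le_trans h0 hx.1
    have hxπ : x ≤ π := le_trans hx.2 (by linarith)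
    have : c * (Real.cos x / c) = Real.cos x := by field_simp
    simp only [Function.comp, smul_eq_mul]
    rw [this, Real.arccos_cos hx0 hxπ]
    field_simp
  rw [step1, step2]

noncomputable def AA (m : ℕ) (t : ℝ) : ℝ :=
  -(t ^ (m+2) * Real.cos (2*t)) / 4 + ((m:ℝ)+2) * t ^ (m+1) * Real.sin (2*t) / 8

lemma contAA (m : ℕ) : Continuous (AA m) := by
  unfold AA; fun_prop

lemma hasDerivAA (m : ℕ) (t : ℝ) :
    HasDerivAt (AA m) (t ^ (m+2) * Real.sin t * Real.cos t
      + (((m:ℝ)+2) * ((m:ℝ)+1) / 4) * (t ^ m * Real.sin t * Real.cos t)) t := by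
  have h2t : HasDerivAt (fun t : ℝ => 2 * t) 2 t := by
    simpa using (hasDerivAt_id t).const_mul 2
  have hcos : HasDerivAt (fun t : ℝ => Real.cos (2*t)) (-Real.sin (2*t) * 2) t :=
    (Real.hasDerivAt_cos (2*t)).comp t h2t
  have hsin : HasDerivAt (fun t : ℝ => Real.sin (2*t)) (Real.cos (2*t) * 2) t :=
    (Real.hasDerivAt_sin (2*t)).comp t h2t
  have hp2 : HasDerivAt (fun t : ℝ => t ^ (m+2)) (((m:ℝ)+2) * t ^ (m+1)) t := by
    simpa using hasDerivAt_pow (m+2) t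
  have hp1 : HasDerivAt (fun t : ℝ => t ^ (m+1)) (((m:ℝ)+1) * t ^ m) t := by
    simpa using hasDerivAt_pow (m+1) t
  have := (((hp2.mul hcos).neg.div_const 4).add
    ((((hp1.mul hsin).const_mul ((m:ℝ)+2))).div_const 8))
  refine (this.congr_deriv ?_).congr_of_eventuallyEq (Filter.Eventually.of_forall fun x => ?_)
  · rw [Real.sin_two_mul]; ring
  · simp only [AA, Pi.add_apply, Pi.mul_apply, Pi.neg_apply]; ring

lemma AA_pi_div_two (m : ℕ) : AA m (π/2) = (π/2) ^ (m+2) / 4 := by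
  have : 2 * (π/2) = π := by ring
  simp [AA, this]

lemma int_AA (m : ℕ) (θ : ℝ) :
    (∫ t in θ..(π/2), (t ^ (m+2) * Real.sin t * Real.cos t
      + (((m:ℝ)+2) * ((m:ℝ)+1) / 4) * (t ^ m * Real.sin t * Real.cos t)))
      = (π/2) ^ (m+2) / 4 - AA m θ := by
  rw [← AA_pi_div_two m]
  exact intervalIntegral.integral_eq_sub_of_hasDerivAt (fun t _ => hasDerivAA m t)
    ((by fun_prop : Continuous fun t : ℝ => (t ^ (m+2) * Real.sin t * Real.cos t
      + (((m:ℝ)+2) * ((m:ℝ)+1) / 4) * (t ^ m * Real.sin t * Real.cos t))).intervalIntegrable _ _)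

noncomputable def Phi (m : ℕ) (θ : ℝ) : ℝ :=
  (π/2) ^ (m+2) * Real.tan θ / 4 + θ ^ (m+3) / (2*((m:ℝ)+3)) - θ ^ (m+2) * Real.tan θ / 4

lemma hasDerivPhi (m : ℕ) {θ : ℝ} (hc : Real.cos θ ≠ 0) :
    HasDerivAt (Phi m) ((Real.cos θ)⁻¹ ^ 2 * ((π/2) ^ (m+2) / 4 - AA m θ)) θ := by
  have htan : HasDerivAt Real.tan (1 / Real.cos θ ^ 2) θ := Real.hasDerivAt_tan hc
  have hp3 : HasDerivAt (fun t : ℝ => t ^ (m+3)) (((m:ℝ)+3) * θ ^ (m+2)) θ := by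
    simpa using hasDerivAt_pow (m+3) θ
  have hp2 : HasDerivAt (fun t : ℝ => t ^ (m+2)) (((m:ℝ)+2) * θ ^ (m+1)) θ := by
    simpa using hasDerivAt_pow (m+2) θ
  have := ((((htan.const_mul ((π/2) ^ (m+2))).div_const 4).add
    (hp3.div_const (2*((m:ℝ)+3)))).sub ((hp2.mul htan).div_const 4))
  refine (this.congr_deriv ?_).congr_of_eventuallyEq (Filter.Eventually.of_forall fun x => rfl)
  have hm3 : ((m:ℝ)+3) ≠ 0 := by positivity
  rw [AA, Real.cos_two_mul, Real.sin_two_mul, Real.tan_eq_sin_div_cos]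
  field_simp
  ring

lemma momentI_eq (n j : ℕ) (hn : 3 ≤ n) :
    momentI n j = (2*(n:ℝ)/π) * ∫ θ in (0:ℝ)..(π/n), I1 j θ := by
  have hπ := Real.pi_pos
  have hn0 : (0:ℝ) < n := by
    have : (3:ℝ) ≤ n := by exact_mod_cast hn
    linarith
  rw [momentI]
  have hfun : (fun θ₁ : ℝ => ∫ η in (0:ℝ)..(π/2),
      (Real.arccos (Real.cos θ₁ * Real.cos η)) ^ j * Real.cos η * Real.sin η) = I1 j := rfl
  rw [hfun, intervalIntegral.integral_const, even_int (contI1 j) (I1_even j)]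
  rw [smul_eq_mul]
  field_simp
  ring

end MomentRecAux

open MomentRecAux Real in
theorem moment_recurrence (n k : ℕ) (hn : 3 ≤ n) (hk : 2 ≤ k) :
    momentI n k =
      -((k : ℝ) * ((k : ℝ) - 1) / 4) * momentI n (k - 2)
        + (1 / ((k : ℝ) + 1)) * (Real.pi / n) ^ k
        + ((n : ℝ) / (2 * Real.pi)) * ((Real.pi / 2) ^ k - (Real.pi / n) ^ k)
            * Real.tan (Real.pi / n) := by
  obtain ⟨m, rfl⟩ : ∃ m, k = m + 2 := ⟨k - 2, by omega⟩
  have hπ := Real.pi_pos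
  have hn0 : (0:ℝ) < n := by
    have : (3:ℝ) ≤ n := by exact_mod_cast hn
    linarith
  have hn3 : (3:ℝ) ≤ n := by exact_mod_cast hn
  set a := π / n with ha
  have ha0 : 0 < a := by positivity
  have ha2 : a < π / 2 := by
    have h3 : a ≤ π / 3 := by rw [ha]; gcongr
    linarith
  have hcos : ∀ θ ∈ Set.uIcc (0:ℝ) a, Real.cos θ ≠ 0 := by
    intro θ hθ
    rw [Set.uIcc_of_le ha0.le] at hθ
    exact (Real.cos_pos_of_mem_Ioo ⟨by linarith [hθ.1], lt_of_le_of_lt hθ.2 ha2⟩).ne'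
  have hintPhi : IntervalIntegrable
      (fun θ => (Real.cos θ)⁻¹ ^ 2 * ((π/2) ^ (m+2) / 4 - AA m θ)) volume 0 a := by
    apply ContinuousOn.intervalIntegrable
    exact (((Real.continuous_cos.continuousOn.inv₀ hcos).pow 2).mul
      (continuousOn_const.sub (contAA m).continuousOn))
  have key : (∫ θ in (0:ℝ)..a, I1 (m+2) θ)
      + (((m:ℝ)+2) * ((m:ℝ)+1) / 4) * (∫ θ in (0:ℝ)..a, I1 m θ)
      = Phi m a - Phi m 0 := by
    rw [← intervalIntegral.integral_const_mul, ← intervalIntegral.integral_add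
      ((contI1 _).intervalIntegrable _ _) (((contI1 m).intervalIntegrable _ _).const_mul _)]
    rw [← intervalIntegral.integral_eq_sub_of_hasDerivAt
      (fun θ hθ => hasDerivPhi m (hcos θ hθ)) hintPhi]
    apply intervalIntegral.integral_congr
    intro θ hθ
    rw [Set.uIcc_of_le ha0.le] at hθ
    have hθ2 : θ < π / 2 := lt_of_le_of_lt hθ.2 ha2
    simp only []
    rw [I1_eq (m+2) hθ.1 hθ2, I1_eq m hθ.1 hθ2, ← int_AA m θ,
      intervalIntegral.integral_add ((by fun_prop : Continuous fun t : ℝ =>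
        t ^ (m+2) * Real.sin t * Real.cos t).intervalIntegrable _ _)
      (((by fun_prop : Continuous fun t : ℝ =>
        t ^ m * Real.sin t * Real.cos t).intervalIntegrable _ _).const_mul _),
      intervalIntegral.integral_const_mul]
    ring
  have hPhi0 : Phi m 0 = 0 := by simp [Phi]
  rw [show m + 2 - 2 = m from rfl, momentI_eq n (m+2) hn, momentI_eq n m hn, ← ha]
  have hS2 : (∫ θ in (0:ℝ)..a, I1 (m+2) θ)
      = Phi m a - (((m:ℝ)+2) * ((m:ℝ)+1) / 4) * (∫ θ in (0:ℝ)..a, I1 m θ) := by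
    rw [hPhi0] at key; linarith
  rw [hS2, Phi]
  have hm3 : ((m:ℝ)+3) ≠ 0 := by positivity
  have hna : (n:ℝ) * a = π := by rw [ha]; field_simp
  push_cast
  have hnne : (n:ℝ) ≠ 0 := hn0.ne'
  have ha0' : a ≠ 0 := ha0.ne'
  rw [← hna]
  field_simp
  ring
end

section
/- For every integer n ≥ 3 and every integer m ≥ 0, the even moments of distance are given by the finite sum I(n,2m) = (−1)^m · ((2m)!/2^{2m}) · ( 1 + ∑_{j=0}^{m−1} ((−1)^{j+1}/(2j+3)!) · (2π/n)^{2j+2} + (n/(2π)) · tan(π/n) · ∑_{j=0}^{m−1} ((−1)^{j+1}/(2j+2)!) · ( π^{2j+2} − (2π/n)^{2j+2} ) ). -/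
open MeasureTheory

open Real Finset

noncomputable def Pm (m : ℕ) (x : ℝ) : ℝ :=
  ∑ j ∈ Finset.range (m+1), (-1:ℝ)^(m+j) * ((2*m).factorial / (2*j).factorial) * x^(2*j)

noncomputable def Qm (m : ℕ) (x : ℝ) : ℝ :=
  ∑ j ∈ Finset.range m, (-1:ℝ)^(m+1+j) * ((2*m).factorial / (2*j+1).factorial) * x^(2*j+1)

noncomputable def Sm (m : ℕ) (x : ℝ) : ℝ := -Real.cos x * Pm m x + Real.sin x * Qm m x
noncomputable def Cm (m : ℕ) (x : ℝ) : ℝ := Real.sin x * Pm m x + Real.cos x * Qm m x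

lemma hasDerivAt_Pm (m : ℕ) (x : ℝ) : HasDerivAt (Pm m) (Qm m x) x := by
  have h : HasDerivAt (Pm m)
      (∑ j ∈ Finset.range (m+1),
        (-1:ℝ)^(m+j) * ((2*m).factorial / (2*j).factorial) * ((2*j) * x^(2*j-1))) x := by
    apply HasDerivAt.fun_sum
    intro j _
    have := (hasDerivAt_pow (2*j) x).const_mul
      ((-1:ℝ)^(m+j) * ((2*m).factorial / (2*j).factorial))
    refine this.congr_deriv ?_; push_cast; ring
  convert h using 1
  rw [Finset.sum_range_succ']
  simp only [Nat.mul_zero, pow_zero, Nat.cast_zero, zero_mul, mul_zero, add_zero]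
  unfold Qm
  apply Finset.sum_congr rfl
  intro j _
  rw [show 2*(j+1)-1 = 2*j+1 from by omega, show m+(j+1) = m+1+j from by omega]
  have key : ((2*(j+1)).factorial : ℝ) = (2*j+2) * (2*j+1).factorial := by
    rw [show 2*(j+1) = (2*j+1)+1 from by omega, Nat.factorial_succ]; push_cast; ring
  rw [key]
  have h1 : ((2*j+1).factorial:ℝ) ≠ 0 := by positivity
  push_cast
  field_simp

lemma hasDerivAt_Qm (m : ℕ) (x : ℝ) : HasDerivAt (Qm m) (x^(2*m) - Pm m x) x := by
  have h : HasDerivAt (Qm m)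
      (∑ j ∈ Finset.range m,
        (-1:ℝ)^(m+1+j) * ((2*m).factorial / (2*j+1).factorial) * ((2*j+1) * x^(2*j))) x := by
    apply HasDerivAt.fun_sum
    intro j _
    have := (hasDerivAt_pow (2*j+1) x).const_mul
      ((-1:ℝ)^(m+1+j) * ((2*m).factorial / (2*j+1).factorial))
    refine this.congr_deriv ?_; push_cast; ring
  convert h using 1
  unfold Pm
  rw [Finset.sum_range_succ]
  have htop : (-1:ℝ)^(m+m) * ((2*m).factorial / (2*m).factorial) * x^(2*m) = x^(2*m) := by
    have : ((2*m).factorial:ℝ) ≠ 0 := by positivity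
    rw [← two_mul, pow_mul]
    field_simp
    simp
  rw [htop]
  rw [show ∀ A : ℝ, x^(2*m) - (A + x^(2*m)) = -A from fun A => by ring,
    ← Finset.sum_neg_distrib]
  apply Finset.sum_congr rfl
  intro j _
  rw [show m+1+j = (m+j)+1 from by omega, pow_succ]
  have key : ((2*j+1).factorial : ℝ) = (2*j+1) * (2*j).factorial := by
    rw [Nat.factorial_succ]; push_cast; ring
  rw [key]
  have h1 : ((2*j).factorial:ℝ) ≠ 0 := by positivity
  push_cast
  field_simp

lemma hasDerivAt_Sm (m : ℕ) (x : ℝ) : HasDerivAt (Sm m) (x^(2*m) * Real.sin x) x := by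
  have h := (((Real.hasDerivAt_cos x).neg.mul (hasDerivAt_Pm m x)).add
    ((Real.hasDerivAt_sin x).mul (hasDerivAt_Qm m x)))
  refine h.congr_deriv ?_
  simp only [Pi.neg_apply]
  ring

lemma hasDerivAt_Cm (m : ℕ) (x : ℝ) : HasDerivAt (Cm m) (x^(2*m) * Real.cos x) x := by
  have h := (((Real.hasDerivAt_sin x).mul (hasDerivAt_Pm m x)).add
    ((Real.hasDerivAt_cos x).mul (hasDerivAt_Qm m x)))
  refine h.congr_deriv ?_
  ring

lemma Pm_even (m : ℕ) (x : ℝ) : Pm m (-x) = Pm m x := by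
  unfold Pm; apply Finset.sum_congr rfl; intro j _
  rw [show (-x)^(2*j) = x^(2*j) from by rw [pow_mul, pow_mul, neg_sq]]

lemma Qm_odd (m : ℕ) (x : ℝ) : Qm m (-x) = -Qm m x := by
  unfold Qm; rw [← Finset.sum_neg_distrib]
  apply Finset.sum_congr rfl; intro j _
  rw [show (-x)^(2*j+1) = -x^(2*j+1) from by
    rw [pow_succ, pow_succ, pow_mul, pow_mul, neg_sq]; ring]
  ring

lemma Sm_even (m : ℕ) (x : ℝ) : Sm m (-x) = Sm m x := by
  unfold Sm; rw [Real.cos_neg, Real.sin_neg, Pm_even, Qm_odd]; ring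

lemma Cm_odd (m : ℕ) (x : ℝ) : Cm m (-x) = -Cm m x := by
  unfold Cm; rw [Real.cos_neg, Real.sin_neg, Pm_even, Qm_odd]; ring

lemma continuous_Sm (m : ℕ) : Continuous (Sm m) := by
  unfold Sm Pm Qm; fun_prop

lemma Sm_pi (m : ℕ) : Sm m Real.pi = Pm m Real.pi := by
  unfold Sm; rw [Real.cos_pi, Real.sin_pi]; ring

lemma eta_integral (m : ℕ) (c : ℝ) (hc0 : 0 < c) (hc1 : c ≤ 1) :
    ∫ η in (0:ℝ)..(Real.pi/2),
        (Real.arccos (c * Real.cos η))^(2*m) * Real.cos η * Real.sin η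
      = (Sm m Real.pi - Sm m (2 * Real.arccos c)) / (2^(2*m+2) * c^2) := by
  have hc : (c:ℝ) ≠ 0 := ne_of_gt hc0
  set d : ℝ := 2^(2*m+2) * c^2 with hd
  have hdne : d ≠ 0 := by positivity
  set f : ℝ → ℝ := fun η => (Sm m (2 * Real.arccos (c * Real.cos η)) - Sm m Real.pi) / d
    with hf
  have hab : (0:ℝ) ≤ Real.pi/2 := by positivity
  have hcont : ContinuousOn f (Set.Icc 0 (Real.pi/2)) := by
    apply Continuous.continuousOn
    apply Continuous.div_const
    apply Continuous.sub _ continuous_const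
    exact (continuous_Sm m).comp
      (continuous_const.mul (Real.continuous_arccos.comp (continuous_const.mul Real.continuous_cos)))
  have hderiv : ∀ η ∈ Set.Ioo (0:ℝ) (Real.pi/2),
      HasDerivAt f ((Real.arccos (c * Real.cos η))^(2*m) * Real.cos η * Real.sin η) η := by
    intro η hη
    obtain ⟨hη0, hη1⟩ := hη
    have hcosη1 : Real.cos η < 1 := by
      calc Real.cos η < Real.cos 0 := by
            apply Real.cos_lt_cos_of_nonneg_of_le_pi le_rfl _ hη0
            linarith [Real.pi_pos]
        _ = 1 := Real.cos_zero
    have hcosη0 : 0 < Real.cos η := Real.cos_pos_of_mem_Ioo ⟨by linarith [Real.pi_pos], hη1⟩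
    set u : ℝ := c * Real.cos η with hu
    have hu0 : 0 < u := mul_pos hc0 hcosη0
    have hu1 : u < 1 := by
      calc u ≤ 1 * Real.cos η := by
            apply mul_le_mul_of_nonneg_right hc1 hcosη0.le
        _ < 1 := by linarith
    have hs : Real.sqrt (1 - u^2) ≠ 0 := by
      apply ne_of_gt; apply Real.sqrt_pos.2; nlinarith
    have h1 : HasDerivAt (fun η => c * Real.cos η) (c * (-Real.sin η)) η :=
      (Real.hasDerivAt_cos η).const_mul c
    have h2 : HasDerivAt Real.arccos (-(1/Real.sqrt (1 - u^2))) u :=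
      Real.hasDerivAt_arccos (by linarith) (by linarith)
    have h3 : HasDerivAt (fun η => Real.arccos (c * Real.cos η))
        (-(1/Real.sqrt (1 - u^2)) * (c * (-Real.sin η))) η := by have := h2.comp η h1; exact this
    have h4 : HasDerivAt (fun η => 2 * Real.arccos (c * Real.cos η))
        (2 * (-(1/Real.sqrt (1 - u^2)) * (c * (-Real.sin η)))) η := h3.const_mul 2
    have h5 : HasDerivAt (Sm m) ((2 * Real.arccos u)^(2*m) * Real.sin (2 * Real.arccos u))
        (2 * Real.arccos u) := hasDerivAt_Sm m _
    have h6 : HasDerivAt (fun η => Sm m (2 * Real.arccos (c * Real.cos η)))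
        ((2 * Real.arccos u)^(2*m) * Real.sin (2 * Real.arccos u) *
          (2 * (-(1/Real.sqrt (1 - u^2)) * (c * (-Real.sin η))))) η := by have := h5.comp η h4; exact this
    have h7 := (h6.sub_const (Sm m Real.pi)).div_const d
    refine h7.congr_deriv ?_
    rw [Real.sin_two_mul, Real.sin_arccos, Real.cos_arccos (by linarith) (by linarith)]
    rw [mul_pow (2:ℝ) (Real.arccos u) (2*m), hd, hu]
    rw [pow_add]
    have hs' : Real.sqrt (1 - c^2 * Real.cos η^2) ≠ 0 := by rw [← mul_pow, ← hu]; exact hs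
    field_simp
  have hint : IntervalIntegrable
      (fun η => (Real.arccos (c * Real.cos η))^(2*m) * Real.cos η * Real.sin η)
      volume 0 (Real.pi/2) := by
    apply Continuous.intervalIntegrable
    exact (((Real.continuous_arccos.comp
      (continuous_const.mul Real.continuous_cos)).pow _).mul Real.continuous_cos).mul
      Real.continuous_sin
  have := intervalIntegral.integral_eq_sub_of_hasDeriv_right_of_le hab hcont
    (fun η hη => (hderiv η hη).hasDerivWithinAt) hint
  rw [this, hf]
  simp only [Real.cos_pi_div_two, mul_zero, Real.arccos_zero, Real.cos_zero, mul_one]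
  rw [show 2 * (Real.pi/2) = Real.pi from by ring]
  field_simp
  ring

noncomputable def Bf (m : ℕ) (θ : ℝ) : ℝ :=
  (Sm m Real.pi - Sm m (2*θ)) * Real.tan θ
    + 2^(2*m+1) * θ^(2*m+1) / (2*m+1) - Cm m (2*θ)

lemma Bf_odd (m : ℕ) (θ : ℝ) : Bf m (-θ) = -Bf m θ := by
  unfold Bf
  rw [show 2*(-θ) = -(2*θ) from by ring, Sm_even, Cm_odd, Real.tan_neg,
    Odd.neg_pow ⟨m, by omega⟩]
  ring

lemma hasDerivAt_Bf (m : ℕ) (θ : ℝ) (h : Real.cos θ ≠ 0) :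
    HasDerivAt (Bf m) ((Sm m Real.pi - Sm m (2*θ)) / Real.cos θ^2) θ := by
  have h2 : HasDerivAt (fun θ : ℝ => (2:ℝ)*θ) 2 θ := by
    simpa using (hasDerivAt_id θ).const_mul (2:ℝ)
  have hS2 : HasDerivAt (fun θ => Sm m (2*θ)) ((2*θ)^(2*m) * Real.sin (2*θ) * 2) θ :=
    (hasDerivAt_Sm m (2*θ)).comp θ h2
  have hC2 : HasDerivAt (fun θ => Cm m (2*θ)) ((2*θ)^(2*m) * Real.cos (2*θ) * 2) θ :=
    (hasDerivAt_Cm m (2*θ)).comp θ h2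
  have ht : HasDerivAt Real.tan (1 / Real.cos θ^2) θ := Real.hasDerivAt_tan h
  have hpow : HasDerivAt (fun θ : ℝ => 2^(2*m+1) * θ^(2*m+1) / (2*m+1))
      (2^(2*m+1) * ((2*m+1) * θ^(2*m)) / (2*m+1)) θ := by
    have := ((hasDerivAt_pow (2*m+1) θ).const_mul ((2:ℝ)^(2*m+1))).div_const ((2*m:ℝ)+1)
    refine this.congr_deriv ?_
    · push_cast; simp only [Nat.add_sub_cancel]
  have hfull := ((((hasDerivAt_const θ (Sm m Real.pi)).sub hS2).mul ht).add hpow).sub hC2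
  refine hfull.congr_deriv ?_
  simp only [Pi.sub_apply]
  rw [Real.tan_eq_sin_div_cos, Real.sin_two_mul, Real.cos_two_mul', mul_pow]
  have hm : ((2*m:ℕ):ℝ)+1 ≠ 0 := by positivity
  field_simp
  linear_combination (-2 * 2^(m*2) * θ^(m*2) * Real.cos θ^2) *
    (Real.sin_sq_add_cos_sq θ)

lemma P_diff (m : ℕ) (x y : ℝ) :
    Pm m x - Pm m y = (-1:ℝ)^m * (2*m).factorial *
      ∑ j ∈ Finset.range m, ((-1:ℝ)^(j+1) / (2*j+2).factorial) * (x^(2*j+2) - y^(2*j+2)) := by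
  unfold Pm
  rw [← Finset.sum_sub_distrib, Finset.sum_range_succ', Finset.mul_sum]
  simp only [Nat.mul_zero, pow_zero, sub_self, mul_zero, zero_mul, add_zero]
  apply Finset.sum_congr rfl
  intro j _
  rw [show m+(j+1) = m+(j+1) from rfl, pow_add,
    show 2*(j+1) = 2*j+2 from by omega]
  ring

lemma B_trig (m : ℕ) (a : ℝ) (h : Real.cos a ≠ 0) :
    Bf m a = (Pm m Real.pi - Pm m (2*a)) * Real.tan a - Qm m (2*a)
      + 2^(2*m+1) * a^(2*m+1) / (2*m+1) := by
  unfold Bf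
  rw [Sm_pi]
  unfold Sm Cm
  rw [Real.tan_eq_sin_div_cos, Real.sin_two_mul, Real.cos_two_mul]
  field_simp
  linear_combination (-(4*(m:ℝ)+2) * Real.cos a * Qm m (2*a)) * (Real.sin_sq_add_cos_sq a)

lemma nonTan (m : ℕ) (a : ℝ) :
    -Qm m (2*a) + 2^(2*m+1) * a^(2*m+1) / (2*m+1) =
      2*a * ((-1:ℝ)^m * (2*m).factorial *
        (1 + ∑ j ∈ Finset.range m, ((-1:ℝ)^(j+1) / (2*j+3).factorial) * (2*a)^(2*j+2))) := by
  have key : -Qm m (2*a) + 2^(2*m+1) * a^(2*m+1) / (2*m+1)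
      = ∑ j ∈ Finset.range (m+1),
          (-1:ℝ)^(m+j) * ((2*m).factorial / (2*j+1).factorial) * (2*a)^(2*j+1) := by
    rw [Finset.sum_range_succ]
    congr 1
    · unfold Qm
      rw [← Finset.sum_neg_distrib]
      apply Finset.sum_congr rfl
      intro j _
      rw [show m+1+j = (m+j)+1 from by omega, pow_succ]
      ring
    · have hs : (-1:ℝ)^(m+m) = 1 := by
        rw [← two_mul, pow_mul]; norm_num
      have hfac : ((2*m+1).factorial : ℝ) = (2*m+1) * (2*m).factorial := by
        rw [Nat.factorial_succ]; push_cast; ring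
      have h1 : ((2*m).factorial : ℝ) ≠ 0 := by positivity
      have h2 : ((2*m:ℕ):ℝ)+1 ≠ 0 := by positivity
      rw [hs, hfac, mul_pow]
      push_cast
      field_simp
  rw [key, Finset.sum_range_succ']
  simp only [Nat.mul_zero, zero_add, Nat.factorial_one, Nat.cast_one, div_one, pow_one,
    add_zero, pow_zero, mul_one]
  have hterm : ∀ j ∈ Finset.range m,
      (-1:ℝ)^(m+(j+1)) * ((2*m).factorial / (2*(j+1)+1).factorial) * (2*a)^(2*(j+1)+1)
      = (2*a * ((-1:ℝ)^m * (2*m).factorial)) *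
          (((-1:ℝ)^(j+1) / (2*j+3).factorial) * (2*a)^(2*j+2)) := by
    intro j _
    rw [pow_add, show 2*(j+1)+1 = 2*j+3 from by omega]
    ring
  rw [Finset.sum_congr rfl hterm, ← Finset.mul_sum, mul_add, mul_comm ((-1:ℝ)^m * ((2*m).factorial:ℝ))]
  ring

theorem even_moment_finite_sum (n m : ℕ) (hn : 3 ≤ n) :
    momentI n (2 * m) =
      (-1 : ℝ) ^ m * ((2 * m).factorial / 2 ^ (2 * m)) *
        ( 1
          + ∑ j ∈ Finset.range m,
              ((-1 : ℝ) ^ (j + 1) / (2 * j + 3).factorial) * (2 * Real.pi / n) ^ (2 * j + 2)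
          + ((n : ℝ) / (2 * Real.pi)) * Real.tan (Real.pi / n) *
              ∑ j ∈ Finset.range m,
                ((-1 : ℝ) ^ (j + 1) / (2 * j + 2).factorial) *
                  (Real.pi ^ (2 * j + 2) - (2 * Real.pi / n) ^ (2 * j + 2)) ) := by
  have hπ := Real.pi_pos
  have hn0 : (0:ℝ) < n := by
    have : (3:ℝ) ≤ n := by exact_mod_cast hn
    linarith
  have hn3 : (3:ℝ) ≤ n := by exact_mod_cast hn
  set a : ℝ := Real.pi / n with ha
  have ha0 : 0 < a := by positivity
  have ha3 : a ≤ Real.pi / 3 := by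
    rw [ha, div_le_div_iff₀ hn0 (by norm_num)]
    nlinarith
  have hcos : ∀ θ : ℝ, -a ≤ θ → θ ≤ a → 0 < Real.cos θ := by
    intro θ h1 h2
    apply Real.cos_pos_of_mem_Ioo
    constructor <;> [nlinarith; nlinarith]
  -- Step 1: inner η-integral in closed form
  have h1 : Set.EqOn
      (fun θ : ℝ => ∫ η in (0:ℝ)..(Real.pi/2),
        (Real.arccos (Real.cos θ * Real.cos η)) ^ (2*m) * Real.cos η * Real.sin η)
      (fun θ : ℝ => (Sm m Real.pi - Sm m (2*θ)) / (2^(2*m+2) * Real.cos θ^2))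
      (Set.uIcc (-a) a) := by
    intro θ hθ
    rw [Set.uIcc_of_le (by linarith)] at hθ
    obtain ⟨hθ1, hθ2⟩ := hθ
    have hc0 : 0 < Real.cos θ := hcos θ hθ1 hθ2
    simp only
    rw [eta_integral m (Real.cos θ) hc0 (Real.cos_le_one θ)]
    have harc : Real.arccos (Real.cos θ) = |θ| := by
      rw [← Real.cos_abs]
      exact Real.arccos_cos (abs_nonneg θ) (by
        rcases abs_cases θ with ⟨h,_⟩|⟨h,_⟩ <;> rw [h] <;> linarith)
    rw [harc]
    rcases abs_cases θ with ⟨h,_⟩|⟨h,_⟩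
    · rw [h]
    · rw [h, show 2*(-θ) = -(2*θ) from by ring, Sm_even]
  -- Step 2: FTC for the θ-integral
  have h2 : (∫ θ in (-a)..a, (Sm m Real.pi - Sm m (2*θ)) / (2^(2*m+2) * Real.cos θ^2))
      = (Bf m a - Bf m (-a)) / 2^(2*m+2) := by
    have hftc := intervalIntegral.integral_eq_sub_of_hasDerivAt
      (f := fun θ => Bf m θ / 2^(2*m+2))
      (f' := fun θ => (Sm m Real.pi - Sm m (2*θ)) / (2^(2*m+2) * Real.cos θ^2))
      (a := -a) (b := a) ?_ ?_
    · rw [hftc]; rw [div_sub_div_same]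
    · intro θ hθ
      rw [Set.uIcc_of_le (by linarith)] at hθ
      have hc0 : 0 < Real.cos θ := hcos θ hθ.1 hθ.2
      have := (hasDerivAt_Bf m θ hc0.ne').div_const (2^(2*m+2))
      refine this.congr_deriv ?_
      simp only [div_div]
      ring
    · apply ContinuousOn.intervalIntegrable
      apply ContinuousOn.div
      · apply Continuous.continuousOn
        apply Continuous.sub continuous_const
        exact (continuous_Sm m).comp (continuous_const.mul continuous_id)
      · fun_prop
      · intro θ hθ
        rw [Set.uIcc_of_le (by linarith)] at hθ
        have hc0 : 0 < Real.cos θ := hcos θ hθ.1 hθ.2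
        positivity
  -- Step 3: closed form for Bf m a
  have hca : 0 < Real.cos a := hcos a (by linarith) le_rfl
  have hBa : Bf m a =
      ((-1:ℝ)^m * (2*m).factorial *
        ∑ j ∈ Finset.range m, ((-1:ℝ)^(j+1) / (2*j+2).factorial) *
          (Real.pi^(2*j+2) - (2*a)^(2*j+2))) * Real.tan a
      + 2*a * ((-1:ℝ)^m * (2*m).factorial *
          (1 + ∑ j ∈ Finset.range m, ((-1:ℝ)^(j+1) / (2*j+3).factorial) * (2*a)^(2*j+2))) := by
    rw [B_trig m a hca.ne', P_diff m Real.pi (2*a)]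
    linear_combination nonTan m a
  -- Step 4: assemble
  unfold momentI
  rw [intervalIntegral.integral_congr h1, intervalIntegral.integral_const, h2, Bf_odd,
    show 2*Real.pi/(n:ℝ) = 2*a from by rw [ha]; ring,
    show (n:ℝ)/(2*Real.pi) = 1/(2*a) from by rw [ha]; field_simp,
    hBa, smul_eq_mul, ha]
  have h2m : (2:ℝ)^(2*m+2) = 4 * 2^(2*m) := by rw [pow_add]; ring
  field_simp
  ring
end

section
/- The first moment of distance on the lens space L(2;1) = ℝP³ is I(2,1) = 1/π + π/4. -/
open MeasureTheory

open Real


lemma aux_mul_cos_le_sin {s : ℝ} (h0 : 0 ≤ s) (h1 : s ≤ π) : s * Real.cos s ≤ Real.sin s := by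
  rcases eq_or_lt_of_le h0 with rfl | hs0
  · simp
  rcases lt_trichotomy s (π/2) with h | h | h
  · have ht := Real.lt_tan hs0 h
    have hc : 0 < Real.cos s := Real.cos_pos_of_mem_Ioo ⟨by linarith [Real.pi_pos], h⟩
    rw [Real.tan_eq_sin_div_cos, lt_div_iff₀ hc] at ht
    linarith
  · rw [h]; simp
  · have hc : Real.cos s ≤ 0 := Real.cos_nonpos_of_pi_div_two_le_of_le h.le (by linarith [Real.pi_pos])
    have hsin : 0 ≤ Real.sin s := Real.sin_nonneg_of_nonneg_of_le_pi h0 h1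
    nlinarith


lemma inner_ftc {c : ℝ} (hc0 : 0 < c) (hc1 : c ≤ 1) :
    ∫ η in (0:ℝ)..(π/2), Real.arccos (c * Real.cos η) * Real.cos η * Real.sin η
    = Real.arccos c / 2 + Real.arcsin c / (4*c^2) - Real.sqrt (1 - c^2) / (4*c) := by
  set H : ℝ → ℝ := fun η => -((Real.cos η)^2/2 * Real.arccos (c*Real.cos η)
      + Real.arcsin (c*Real.cos η)/(4*c^2)
      - Real.cos η * Real.sqrt (1 - (c*Real.cos η)^2)/(4*c)) with hH
  have key : ∫ η in (0:ℝ)..(π/2), Real.arccos (c * Real.cos η) * Real.cos η * Real.sin η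
      = H (π/2) - H 0 := by
    apply intervalIntegral.integral_eq_sub_of_hasDeriv_right_of_le
      (by positivity)
    · apply Continuous.continuousOn
      have h1 : Continuous fun η : ℝ => c * Real.cos η := by fun_prop
      have h2 : Continuous fun η : ℝ => 1 - (c * Real.cos η)^2 := by fun_prop
      exact ((((Real.continuous_cos.pow 2).div_const 2).mul
          (Real.continuous_arccos.comp h1)).add
          ((Real.continuous_arcsin.comp h1).div_const (4*c^2))
        |>.sub ((Real.continuous_cos.mul (Real.continuous_sqrt.comp h2)).div_const (4*c))).neg
    · intro η hη
      apply HasDerivAt.hasDerivWithinAt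
      obtain ⟨hη0, hη1⟩ := hη
      have hcosp : 0 < Real.cos η := Real.cos_pos_of_mem_Ioo ⟨by linarith [Real.pi_pos], hη1⟩
      have hcosl : Real.cos η < 1 := by
        have := Real.cos_lt_cos_of_nonneg_of_le_pi (le_refl 0) (by linarith [Real.pi_pos]) hη0
        simpa using this
      have hx0 : 0 < c * Real.cos η := by positivity
      have hx1 : c * Real.cos η < 1 := by nlinarith
      have h1x : 0 < 1 - (c * Real.cos η)^2 := by nlinarith
      have hne1 : c * Real.cos η ≠ -1 := by linarith
      have hne2 : c * Real.cos η ≠ 1 := by linarith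
      have hcos : HasDerivAt Real.cos (-Real.sin η) η := Real.hasDerivAt_cos η
      have hx : HasDerivAt (fun η => c * Real.cos η) (c * -Real.sin η) η := hcos.const_mul c
      have harccos : HasDerivAt (fun η => Real.arccos (c * Real.cos η))
          (-(1 / Real.sqrt (1 - (c*Real.cos η)^2)) * (c * -Real.sin η)) η :=
        by have := (Real.hasDerivAt_arccos hne1 hne2).comp η hx; exact this
      have harcsin : HasDerivAt (fun η => Real.arcsin (c * Real.cos η))
          ((1 / Real.sqrt (1 - (c*Real.cos η)^2)) * (c * -Real.sin η)) η :=
        by have := (Real.hasDerivAt_arcsin hne1 hne2).comp η hx; exact this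
      have h1mx2 : HasDerivAt (fun η => 1 - (c*Real.cos η)^2)
          (-(2 * (c*Real.cos η)^1 * (c * -Real.sin η))) η := (hx.fun_pow 2).const_sub 1
      have hsqrt : HasDerivAt (fun η => Real.sqrt (1 - (c*Real.cos η)^2))
          (1/(2*Real.sqrt (1 - (c*Real.cos η)^2)) * (-(2 * (c*Real.cos η)^1 * (c * -Real.sin η)))) η :=
        (Real.hasDerivAt_sqrt (ne_of_gt h1x)).comp η h1mx2
      have hcossq : HasDerivAt (fun η => (Real.cos η)^2/2)
          ((2 * (Real.cos η)^1 * -Real.sin η)/2) η := (hcos.fun_pow 2).div_const 2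
      have hD := (((hcossq.fun_mul harccos).fun_add (harcsin.div_const (4*c^2))).fun_sub
        ((hcos.fun_mul hsqrt).div_const (4*c))).fun_neg
      convert hD using 1
      set s := Real.sqrt (1 - (c*Real.cos η)^2) with hs_def
      have hs2 : s^2 = 1 - (c*Real.cos η)^2 := Real.sq_sqrt h1x.le
      have hsne : s ≠ 0 := ne_of_gt (Real.sqrt_pos.mpr h1x)
      field_simp
      linear_combination (2*Real.sin η) * hs2
    · apply Continuous.intervalIntegrable
      exact ((Real.continuous_arccos.comp (by fun_prop : Continuous fun η : ℝ => c * Real.cos η)).mul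
        Real.continuous_cos).mul Real.continuous_sin
  rw [key]
  simp only [hH, Real.cos_pi_div_two, Real.cos_zero]
  norm_num [Real.arcsin_zero]
  ring


noncomputable def psiLens (θ : ℝ) : ℝ :=
  |θ|/2 + ((π/2 - |θ|) - |Real.sin θ| * Real.cos θ) / (4 * Real.cos θ ^ 2)

lemma psiLens_neg (θ : ℝ) : psiLens (-θ) = psiLens θ := by
  simp [psiLens, abs_neg, Real.sin_neg, Real.cos_neg]

lemma cos_sin_int : ∫ η in (0:ℝ)..(π/2), Real.cos η * Real.sin η = 1/2 := by
  have h : ∀ η : ℝ, HasDerivAt (fun η => Real.sin η ^ 2 / 2) (Real.cos η * Real.sin η) η := by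
    intro η
    have : HasDerivAt (fun x => Real.sin x ^ 2 / 2) (((2:ℕ):ℝ) * Real.sin η ^ (2 - 1) * Real.cos η / 2) η :=
      ((Real.hasDerivAt_sin η).fun_pow 2).div_const 2
    convert this using 1
    rw [show (2:ℕ) - 1 = 1 from rfl]
    ring
  rw [intervalIntegral.integral_eq_sub_of_hasDerivAt (fun η _ => h η)
    (Continuous.intervalIntegrable (by fun_prop) _ _)]
  simp

lemma inner_eq_nonneg (θ : ℝ) (h0 : 0 ≤ θ) (hθr : θ ≤ π/2) :
    (∫ η in (0:ℝ)..(π/2), Real.arccos (Real.cos θ * Real.cos η) * Real.cos η * Real.sin η)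
    = psiLens θ := by
  rcases eq_or_lt_of_le hθr with hend | hlt
  · -- θ = π/2
    rw [hend]
    have : ∀ η : ℝ, Real.arccos (Real.cos (π/2) * Real.cos η) * Real.cos η * Real.sin η
        = (π/2) * (Real.cos η * Real.sin η) := by
      intro η; rw [Real.cos_pi_div_two]; rw [zero_mul, Real.arccos_zero]; ring
    rw [intervalIntegral.integral_congr (fun η _ => this η),
      intervalIntegral.integral_const_mul, cos_sin_int]
    simp [psiLens, abs_of_nonneg Real.pi_pos.le, Real.cos_pi_div_two, Real.sin_pi_div_two,
      abs_of_nonneg (by positivity : (0:ℝ) ≤ π/2)]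
    ring
  · have hc0 : 0 < Real.cos θ := Real.cos_pos_of_mem_Ioo ⟨by linarith, hlt⟩
    have hc1 : Real.cos θ ≤ 1 := Real.cos_le_one θ
    rw [inner_ftc hc0 hc1]
    have h1 : Real.arccos (Real.cos θ) = θ := Real.arccos_cos h0 (by linarith [Real.pi_pos])
    have h2 : Real.arcsin (Real.cos θ) = π/2 - θ := by
      rw [← Real.sin_pi_div_two_sub θ]
      exact Real.arcsin_sin (by linarith) (by linarith)
    have h3 : Real.sqrt (1 - Real.cos θ ^ 2) = Real.sin θ := by
      rw [← Real.sin_sq θ, Real.sqrt_sq (Real.sin_nonneg_of_nonneg_of_le_pi h0 (by linarith [Real.pi_pos]))]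
    rw [h1, h2, h3]
    have hs : |Real.sin θ| = Real.sin θ :=
      abs_of_nonneg (Real.sin_nonneg_of_nonneg_of_le_pi h0 (by linarith [Real.pi_pos]))
    rw [psiLens, abs_of_nonneg h0, hs]
    field_simp
    ring

lemma inner_eq (θ : ℝ) (hθ : θ ∈ Set.Icc (-(π/2)) (π/2)) :
    (∫ η in (0:ℝ)..(π/2), Real.arccos (Real.cos θ * Real.cos η) * Real.cos η * Real.sin η)
    = psiLens θ := by
  obtain ⟨hθl, hθr⟩ := hθ
  rcases le_or_gt 0 θ with h0 | h0
  · exact inner_eq_nonneg θ h0 hθr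
  · have := inner_eq_nonneg (-θ) (by linarith) (by linarith)
    rw [Real.cos_neg, psiLens_neg] at this
    exact this

-- bounds for the singular part of psiLens
lemma psi_part_bounds {θ : ℝ} (h0 : 0 ≤ θ) (h1 : θ < π/2) :
    0 ≤ ((π/2 - θ) - Real.sin θ * Real.cos θ) / (4 * Real.cos θ ^ 2) ∧
    ((π/2 - θ) - Real.sin θ * Real.cos θ) / (4 * Real.cos θ ^ 2) ≤ (π/2 - θ)/2 := by
  obtain ⟨t, rfl⟩ : ∃ t, θ = π/2 - t := ⟨π/2 - θ, by ring⟩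
  rw [Real.sin_pi_div_two_sub, Real.cos_pi_div_two_sub, show π/2 - (π/2 - t) = t by ring]
  have ht0 : 0 < t := by linarith
  have ht1 : t ≤ π/2 := by linarith
  have hst : 0 < Real.sin t := Real.sin_pos_of_pos_of_lt_pi ht0 (by linarith [Real.pi_pos])
  have hct : 0 ≤ Real.cos t := Real.cos_nonneg_of_mem_Icc ⟨by linarith, ht1⟩
  have hcl : Real.cos t ≤ 1 := Real.cos_le_one t
  have hsl : Real.sin t ≤ t := Real.sin_le ht0.le
  have hnum0 : 0 ≤ t - Real.cos t * Real.sin t := by nlinarith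
  have hnum1 : t - Real.cos t * Real.sin t ≤ 2 * t * Real.sin t ^ 2 := by
    have h2 := aux_mul_cos_le_sin (by linarith : (0:ℝ) ≤ 2*t) (by linarith [Real.pi_pos] : 2*t ≤ π)
    rw [Real.cos_two_mul', Real.sin_two_mul] at h2
    nlinarith [Real.sin_sq_add_cos_sq t]
  constructor
  · positivity
  · rw [div_le_iff₀ (by positivity)]
    nlinarith


noncomputable def PhiLens (θ : ℝ) : ℝ :=
  if θ = π/2 then π^2/16 + 1/4 else θ^2/4 + (π/2 - θ) * Real.sin θ / (4 * Real.cos θ)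

lemma phi_part_bounds {θ : ℝ} (h0 : 0 ≤ θ) (h1 : θ < π/2) :
    Real.sin θ/4 ≤ (π/2 - θ) * Real.sin θ / (4 * Real.cos θ) ∧
    (π/2 - θ) * Real.sin θ / (4 * Real.cos θ) ≤ 1/4 := by
  obtain ⟨t, rfl⟩ : ∃ t, θ = π/2 - t := ⟨π/2 - θ, by ring⟩
  rw [Real.sin_pi_div_two_sub, Real.cos_pi_div_two_sub, show π/2 - (π/2 - t) = t by ring]
  have ht0 : 0 < t := by linarith
  have ht1 : t ≤ π/2 := by linarith
  have hst : 0 < Real.sin t := Real.sin_pos_of_pos_of_lt_pi ht0 (by linarith [Real.pi_pos])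
  have hct : 0 ≤ Real.cos t := Real.cos_nonneg_of_mem_Icc ⟨by linarith, ht1⟩
  have hsl : Real.sin t ≤ t := Real.sin_le ht0.le
  have haux := aux_mul_cos_le_sin ht0.le (by linarith [Real.pi_pos])
  constructor
  · rw [div_le_div_iff₀ (by norm_num) (by positivity)]
    nlinarith
  · rw [div_le_div_iff₀ (by positivity) (by norm_num)]
    nlinarith

lemma contOn_psi : ContinuousOn psiLens (Set.Icc 0 (π/2)) := by
  intro x hx
  rcases eq_or_lt_of_le hx.2 with heq | hlt
  · subst heq
    rw [← continuousWithinAt_diff_self]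
    have hval : psiLens (π/2) = π/4 := by
      simp [psiLens, Real.sin_pi_div_two, Real.cos_pi_div_two,
        abs_of_nonneg (by positivity : (0:ℝ) ≤ π/2)]
      ring
    unfold ContinuousWithinAt
    rw [hval]
    have hmem : ∀ᶠ y in nhdsWithin (π/2) (Set.Icc 0 (π/2) \ {π/2}),
        y ∈ Set.Icc 0 (π/2) \ {π/2} := eventually_mem_nhdsWithin
    have habs : psiLens =ᶠ[nhdsWithin (π/2) (Set.Icc 0 (π/2) \ {π/2})]
        (fun y => y/2 + ((π/2 - y) - Real.sin y * Real.cos y) / (4 * Real.cos y ^ 2)) := by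
      filter_upwards [hmem] with y hy
      have h0 : 0 ≤ y := hy.1.1
      have h1 : y ≤ π/2 := hy.1.2
      rw [psiLens, abs_of_nonneg h0,
        abs_of_nonneg (Real.sin_nonneg_of_nonneg_of_le_pi h0 (by linarith [Real.pi_pos]))]
    rw [show (π/4 : ℝ) = π/4 + 0 by ring]
    apply Filter.Tendsto.congr' habs.symm
    apply Filter.Tendsto.add
    · exact ((continuous_id.div_const 2).tendsto' (π/2) (π/4)
        (by simp only [id_eq]; ring)).mono_left nhdsWithin_le_nhds
    · apply squeeze_zero'
      · filter_upwards [hmem] with y hy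
        exact (psi_part_bounds hy.1.1 (lt_of_le_of_ne hy.1.2 hy.2)).1
      · filter_upwards [hmem] with y hy
        exact (psi_part_bounds hy.1.1 (lt_of_le_of_ne hy.1.2 hy.2)).2
      · exact (((continuous_const.sub continuous_id).div_const 2).tendsto' (π/2) 0
          (by simp)).mono_left nhdsWithin_le_nhds
  · apply ContinuousAt.continuousWithinAt
    have hc : Real.cos x ≠ 0 :=
      ne_of_gt (Real.cos_pos_of_mem_Ioo ⟨by linarith [hx.1, Real.pi_pos], hlt⟩)
    unfold psiLens
    apply ContinuousAt.add
    · fun_prop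
    · exact ContinuousAt.div (by fun_prop) (by fun_prop) (by positivity)

lemma contOn_Phi : ContinuousOn PhiLens (Set.Icc 0 (π/2)) := by
  intro x hx
  rcases eq_or_lt_of_le hx.2 with heq | hlt
  · subst heq
    rw [← continuousWithinAt_diff_self]
    unfold ContinuousWithinAt
    rw [show PhiLens (π/2) = π^2/16 + 1/4 from if_pos rfl]
    have hmem : ∀ᶠ y in nhdsWithin (π/2) (Set.Icc 0 (π/2) \ {π/2}),
        y ∈ Set.Icc 0 (π/2) \ {π/2} := eventually_mem_nhdsWithin
    have habs : PhiLens =ᶠ[nhdsWithin (π/2) (Set.Icc 0 (π/2) \ {π/2})]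
        (fun y => y^2/4 + (π/2 - y) * Real.sin y / (4 * Real.cos y)) := by
      filter_upwards [hmem] with y hy
      exact if_neg hy.2
    apply Filter.Tendsto.congr' habs.symm
    apply Filter.Tendsto.add
    · exact ((continuous_pow 2 |>.div_const 4).tendsto' (π/2) (π^2/16)
        (by ring)).mono_left nhdsWithin_le_nhds
    · apply tendsto_of_tendsto_of_tendsto_of_le_of_le'
        (g := fun y => Real.sin y / 4) (h := fun _ => (1:ℝ)/4)
      · have : Filter.Tendsto (fun y : ℝ => Real.sin y / 4) (nhds (π/2)) (nhds (1/4)) :=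
          (Real.continuous_sin.div_const 4).tendsto' (π/2) (1/4) (by rw [Real.sin_pi_div_two])
        exact this.mono_left nhdsWithin_le_nhds
      · exact tendsto_const_nhds
      · filter_upwards [hmem] with y hy
        exact (phi_part_bounds hy.1.1 (lt_of_le_of_ne hy.1.2 hy.2)).1
      · filter_upwards [hmem] with y hy
        exact (phi_part_bounds hy.1.1 (lt_of_le_of_ne hy.1.2 hy.2)).2
  · apply ContinuousAt.continuousWithinAt
    have hc : Real.cos x ≠ 0 :=
      ne_of_gt (Real.cos_pos_of_mem_Ioo ⟨by linarith [hx.1, Real.pi_pos], hlt⟩)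
    have hev : (fun y => y^2/4 + (π/2 - y) * Real.sin y / (4 * Real.cos y)) =ᶠ[nhds x] PhiLens := by
      filter_upwards [eventually_ne_nhds (ne_of_lt hlt)] with y hy
      exact (if_neg hy).symm
    apply ContinuousAt.congr _ hev
    apply ContinuousAt.add
    · fun_prop
    · exact ContinuousAt.div (by fun_prop) (by fun_prop) (by positivity)

lemma Phi_deriv {θ : ℝ} (hθ : θ ∈ Set.Ioo 0 (π/2)) : HasDerivAt PhiLens (psiLens θ) θ := by
  obtain ⟨h0, h1⟩ := hθ
  have hc : 0 < Real.cos θ := Real.cos_pos_of_mem_Ioo ⟨by linarith [Real.pi_pos], h1⟩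
  have hev : PhiLens =ᶠ[nhds θ] (fun y => y^2/4 + (π/2 - y) * Real.sin y / (4 * Real.cos y)) := by
    filter_upwards [eventually_ne_nhds (ne_of_lt h1)] with y hy
    exact if_neg hy
  have hsq : HasDerivAt (fun x : ℝ => x^2/4) ((2:ℕ) * θ^1/4) θ := (hasDerivAt_pow 2 θ).div_const 4
  have hN : HasDerivAt (fun x => (π/2 - x) * Real.sin x)
      ((-1) * Real.sin θ + (π/2 - θ) * Real.cos θ) θ := by
    exact ((hasDerivAt_id θ).const_sub (π/2)).mul (Real.hasDerivAt_sin θ)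
  have hD : HasDerivAt (fun x => 4 * Real.cos x) (4 * -Real.sin θ) θ :=
    (Real.hasDerivAt_cos θ).const_mul 4
  have hdiv := hN.fun_div hD (by positivity)
  have htotal := hsq.fun_add hdiv
  apply HasDerivAt.congr_of_eventuallyEq _ hev
  convert htotal using 1
  have hsin : 0 ≤ Real.sin θ := Real.sin_nonneg_of_nonneg_of_le_pi h0.le (by linarith [Real.pi_pos])
  rw [psiLens, abs_of_nonneg h0.le, abs_of_nonneg hsin]
  have hpy : Real.sin θ ^ 2 + Real.cos θ ^ 2 = 1 := Real.sin_sq_add_cos_sq θ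
  field_simp
  linear_combination (2*θ - π) * hpy

lemma psi_int_half : ∫ θ in (0:ℝ)..(π/2), psiLens θ = π^2/16 + 1/4 := by
  rw [intervalIntegral.integral_eq_sub_of_hasDeriv_right_of_le (by positivity)
    contOn_Phi (fun θ hθ => (Phi_deriv hθ).hasDerivWithinAt)
    ((contOn_psi.intervalIntegrable_of_Icc (by positivity)))]
  rw [show PhiLens (π/2) = π^2/16 + 1/4 from if_pos rfl]
  have h0 : PhiLens 0 = 0 := by
    rw [PhiLens, if_neg (by positivity)]
    simp
  rw [h0, sub_zero]

lemma psi_int_full : ∫ θ in (-(π/2))..(π/2), psiLens θ = π^2/8 + 1/2 := by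
  have h2 : ContinuousOn psiLens (Set.Icc (-(π/2)) 0) := by
    have hm : Set.MapsTo Neg.neg (Set.Icc (-(π/2)) 0) (Set.Icc 0 (π/2)) := by
      intro x hx
      exact ⟨by linarith [hx.2], by linarith [hx.1]⟩
    have := contOn_psi.comp continuousOn_neg hm
    refine this.congr fun x _ => ?_
    exact (psiLens_neg x).symm
  have i1 : IntervalIntegrable psiLens MeasureTheory.volume (-(π/2)) 0 :=
    h2.intervalIntegrable_of_Icc (by linarith [Real.pi_pos])
  have i2 : IntervalIntegrable psiLens MeasureTheory.volume 0 (π/2) :=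
    contOn_psi.intervalIntegrable_of_Icc (by positivity)
  rw [← intervalIntegral.integral_add_adjacent_intervals i1 i2]
  have hneg : ∫ θ in (-(π/2))..(0:ℝ), psiLens θ = ∫ θ in (0:ℝ)..(π/2), psiLens θ := by
    have := intervalIntegral.integral_comp_neg (a := (0:ℝ)) (b := π/2) (fun θ => psiLens θ)
    rw [neg_zero] at this
    rw [← this]
    apply intervalIntegral.integral_congr
    intro x _
    exact psiLens_neg x
  rw [hneg, psi_int_half]
  ring


lemma assemble : ((2:ℝ) ^ 2 / (2 * π ^ 2)) *
    ∫ θ₂ in (-(π/2))..(π/2),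
      ∫ θ₁ in (-(π/2))..(π/2),
        ∫ η in (0:ℝ)..(π/2),
          (Real.arccos (Real.cos θ₁ * Real.cos η)) ^ 1 * Real.cos η * Real.sin η
    = 1 / π + π / 4 := by
  have hval : (∫ θ₁ in (-(π/2))..(π/2), ∫ η in (0:ℝ)..(π/2),
      (Real.arccos (Real.cos θ₁ * Real.cos η)) ^ 1 * Real.cos η * Real.sin η) = π^2/8 + 1/2 := by
    rw [intervalIntegral.integral_congr (g := psiLens) ?_, psi_int_full]
    intro θ hθ
    rw [Set.uIcc_of_le (by linarith [Real.pi_pos])] at hθ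
    simp only [pow_one]
    exact inner_eq θ hθ
  rw [hval, intervalIntegral.integral_const, smul_eq_mul]
  have hpi : π ≠ 0 := Real.pi_ne_zero
  field_simp
  ring

theorem first_moment_RP3 : momentI 2 1 = 1 / Real.pi + Real.pi / 4 := by
  unfold momentI
  push_cast
  exact assemble
end

section
/- For every integer k ≥ 2, the moments of distance on L(2;1) = ℝP³ satisfy the recurrence I(2,k) = −(k(k−1)/4) · I(2,k−2) + (1/(k+1)) · (π/2)^k + (k/π) · (π/2)^{k−1}. -/
open MeasureTheory

open MeasureTheory Real Filter Set

namespace MomentAux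

noncomputable def psi (m : ℕ) (r : ℝ) : ℝ :=
  -(1/4) * r^(m+2) * Real.cos (2*r) + ((m:ℝ)+2)/8 * r^(m+1) * Real.sin (2*r)

noncomputable def mu (m : ℕ) : ℝ := ((m:ℝ)+2) * ((m:ℝ)+1) / 4

lemma psi_deriv (m : ℕ) (r : ℝ) :
    HasDerivAt (psi m) ((1/2) * (r^(m+2) + mu m * r^m) * Real.sin (2*r)) r := by
  have h2r : HasDerivAt (fun r : ℝ => 2*r) 2 r := by simpa using (hasDerivAt_id r).const_mul 2
  have hc : HasDerivAt (fun r : ℝ => Real.cos (2*r)) (-Real.sin (2*r) * 2) r :=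
    (Real.hasDerivAt_cos (2*r)).comp r h2r
  have hs : HasDerivAt (fun r : ℝ => Real.sin (2*r)) (Real.cos (2*r) * 2) r :=
    (Real.hasDerivAt_sin (2*r)).comp r h2r
  have hp1 : HasDerivAt (fun r : ℝ => r^(m+2)) (((m:ℝ)+2) * r^(m+1)) r := by
    simpa using hasDerivAt_pow (m+2) r
  have hp2 : HasDerivAt (fun r : ℝ => r^(m+1)) (((m:ℝ)+1) * r^m) r := by
    simpa using hasDerivAt_pow (m+1) r
  have := ((hp1.mul hc).const_mul (-(1/4):ℝ)).add ((hp2.mul hs).const_mul (((m:ℝ)+2)/8))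
  convert this using 1
  · rfl
  · rfl
  · ext r; simp [psi]; ring
  · simp [mu]; ring

end MomentAux

namespace MomentAux

noncomputable def F (j : ℕ) (θ : ℝ) : ℝ :=
  ∫ η in (0:ℝ)..(Real.pi/2),
    (Real.arccos (Real.cos θ * Real.cos η)) ^ j * Real.cos η * Real.sin η

lemma contF (j : ℕ) : Continuous (F j) := by
  apply intervalIntegral.continuous_parametric_intervalIntegral_of_continuous'
  apply Continuous.mul
  apply Continuous.mul
  · exact (Real.continuous_arccos.comp ((Real.continuous_cos.comp continuous_fst).mul
      (Real.continuous_cos.comp continuous_snd))).pow j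
  · exact Real.continuous_cos.comp continuous_snd
  · exact Real.continuous_sin.comp continuous_snd

lemma F_neg (j : ℕ) (θ : ℝ) : F j (-θ) = F j θ := by
  simp [F]

end MomentAux

namespace MomentAux

lemma momentI_eq (j : ℕ) :
    momentI 2 j = (4 / Real.pi) * ∫ θ in (0:ℝ)..(Real.pi/2), F j θ := by
  have hπ : (Real.pi : ℝ) ≠ 0 := Real.pi_ne_zero
  have h2 : ((2:ℕ):ℝ) = 2 := by norm_num
  rw [momentI]
  rw [h2]
  rw [intervalIntegral.integral_const]
  -- inner double integral is ∫ θ₁ in -(π/2)..π/2, F j θ₁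
  have hsplit : (∫ θ₁ in (-(Real.pi/2))..(Real.pi/2), F j θ₁)
      = 2 * ∫ θ in (0:ℝ)..(Real.pi/2), F j θ := by
    have hadd : (∫ θ₁ in (-(Real.pi/2))..(0:ℝ), F j θ₁)
        + (∫ θ₁ in (0:ℝ)..(Real.pi/2), F j θ₁)
        = ∫ θ₁ in (-(Real.pi/2))..(Real.pi/2), F j θ₁ :=
      intervalIntegral.integral_add_adjacent_intervals
        ((contF j).intervalIntegrable _ _) ((contF j).intervalIntegrable _ _)
    have hneg : (∫ θ₁ in (-(Real.pi/2))..(0:ℝ), F j θ₁)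
        = ∫ θ in (0:ℝ)..(Real.pi/2), F j θ := by
      have := intervalIntegral.integral_comp_neg (a := (0:ℝ)) (b := Real.pi/2) (f := F j)
      rw [neg_zero] at this
      rw [← this]
      congr 1
      ext θ
      exact F_neg j θ
    linarith
  rw [show (∫ θ₁ in (-(Real.pi/2))..(Real.pi/2),
        ∫ η in (0:ℝ)..(Real.pi/2),
          (Real.arccos (Real.cos θ₁ * Real.cos η)) ^ j * Real.cos η * Real.sin η)
      = ∫ θ₁ in (-(Real.pi/2))..(Real.pi/2), F j θ₁ from rfl]
  rw [hsplit]
  rw [smul_eq_mul]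
  have : Real.pi / 2 - -(Real.pi / 2) = Real.pi := by ring
  rw [this]
  field_simp
  ring

end MomentAux

namespace MomentAux

noncomputable def E (m : ℕ) (θ : ℝ) : ℝ :=
  ((Real.pi/2)^(m+2)/4 - psi m θ) / Real.cos θ ^ 2

lemma psi_pi_div_two (m : ℕ) : psi m (Real.pi/2) = (Real.pi/2)^(m+2)/4 := by
  have : 2 * (Real.pi/2) = Real.pi := by ring
  simp [psi, this]
  ring

lemma eta_deriv (m : ℕ) {θ : ℝ} (h0 : 0 < θ) (h1 : θ < Real.pi/2) (η : ℝ) :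
    HasDerivAt (fun η => psi m (Real.arccos (Real.cos θ * Real.cos η)))
      (Real.cos θ ^ 2 *
        (((Real.arccos (Real.cos θ * Real.cos η))^(m+2)
          + mu m * (Real.arccos (Real.cos θ * Real.cos η))^m)
          * Real.cos η * Real.sin η)) η := by
  set x := Real.cos θ * Real.cos η with hx
  have hct0 : 0 < Real.cos θ := Real.cos_pos_of_mem_Ioo ⟨by linarith [Real.pi_pos], h1⟩
  have hct1 : Real.cos θ < 1 := by
    have := Real.cos_lt_cos_of_nonneg_of_le_pi (le_refl 0) (by linarith [Real.pi_pos]) h0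
    simpa using this
  have hxlt : |x| < 1 := by
    rw [hx, abs_mul, abs_of_pos hct0]
    calc Real.cos θ * |Real.cos η| ≤ Real.cos θ * 1 := by
          exact mul_le_mul_of_nonneg_left (Real.abs_cos_le_one η) (le_of_lt hct0)
      _ < 1 := by linarith
  have hx1 : x < 1 := lt_of_le_of_lt (le_abs_self x) hxlt
  have hx2 : -1 < x := by
    have := neg_abs_le x; linarith [hxlt]
  have hsq : 0 < 1 - x^2 := by nlinarith [hxlt, abs_nonneg x, sq_abs x]
  have hsqrt : 0 < Real.sqrt (1 - x^2) := Real.sqrt_pos.mpr hsq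
  have hinner : HasDerivAt (fun η => Real.cos θ * Real.cos η)
      (Real.cos θ * (-Real.sin η)) η := (Real.hasDerivAt_cos η).const_mul (Real.cos θ)
  have harc : HasDerivAt (fun η => Real.arccos (Real.cos θ * Real.cos η))
      (-(1 / Real.sqrt (1 - x^2)) * (Real.cos θ * (-Real.sin η))) η :=
    by have := (Real.hasDerivAt_arccos (ne_of_gt hx2) (ne_of_lt hx1)).comp η hinner; exact this
  have hcomp := (psi_deriv m (Real.arccos x)).comp η harc
  convert hcomp using 1
  · rfl
  · rfl
  · rfl
  rw [Real.sin_two_mul, Real.sin_arccos, Real.cos_arccos (le_of_lt hx2) (le_of_lt hx1)]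
  rw [hx]
  have hs' : Real.sqrt (1 - Real.cos η ^ 2 * Real.cos θ ^ 2) ≠ 0 := by
    rw [show Real.cos η ^ 2 * Real.cos θ ^ 2 = x ^ 2 by rw [hx]; ring]; exact hsqrt.ne'
  field_simp
  have hs'' : Real.sqrt (1 - Real.cos θ ^ 2 * Real.cos η ^ 2) ≠ 0 := by
    rw [mul_comm]; exact hs'
  rw [mul_div_assoc, div_self hs'', mul_one]

lemma G_eq (m : ℕ) {θ : ℝ} (h0 : 0 < θ) (h1 : θ < Real.pi/2) :
    F (m+2) θ + mu m * F m θ = E m θ := by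
  have hπ := Real.pi_pos
  have hct0 : 0 < Real.cos θ := Real.cos_pos_of_mem_Ioo ⟨by linarith, h1⟩
  have hcombo : Continuous (fun η =>
      ((Real.arccos (Real.cos θ * Real.cos η))^(m+2)
        + mu m * (Real.arccos (Real.cos θ * Real.cos η))^m)
        * Real.cos η * Real.sin η) := by
    have ha : Continuous fun η => Real.arccos (Real.cos θ * Real.cos η) :=
      Real.continuous_arccos.comp (continuous_const.mul Real.continuous_cos)
    exact (((ha.pow _).add (continuous_const.mul (ha.pow _))).mul
      Real.continuous_cos).mul Real.continuous_sin
  have hFTC := intervalIntegral.integral_eq_sub_of_hasDerivAt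
    (f := fun η => psi m (Real.arccos (Real.cos θ * Real.cos η)))
    (f' := fun η => Real.cos θ ^ 2 *
        (((Real.arccos (Real.cos θ * Real.cos η))^(m+2)
          + mu m * (Real.arccos (Real.cos θ * Real.cos η))^m)
          * Real.cos η * Real.sin η))
    (a := (0:ℝ)) (b := Real.pi/2)
    (fun η _ => eta_deriv m h0 h1 η)
    ((continuous_const.mul hcombo).intervalIntegrable _ _)
  rw [intervalIntegral.integral_const_mul] at hFTC
  have hend : Real.arccos (Real.cos θ * Real.cos (Real.pi/2)) = Real.pi/2 := by
    simp [Real.cos_pi_div_two]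
  have hstart : Real.arccos (Real.cos θ * Real.cos 0) = θ := by
    rw [Real.cos_zero, mul_one]
    exact Real.arccos_cos (le_of_lt h0) (by linarith)
  rw [hend, hstart, psi_pi_div_two] at hFTC
  -- combine F's into the combined integral
  have hA : Continuous fun η => Real.arccos (Real.cos θ * Real.cos η) :=
    Real.continuous_arccos.comp (continuous_const.mul Real.continuous_cos)
  have hint1 : IntervalIntegrable (fun η =>
      (Real.arccos (Real.cos θ * Real.cos η))^(m+2) * Real.cos η * Real.sin η)
      volume 0 (Real.pi/2) :=
    (((hA.pow _).mul Real.continuous_cos).mul Real.continuous_sin).intervalIntegrable _ _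
  have hint2 : IntervalIntegrable (fun η =>
      mu m * ((Real.arccos (Real.cos θ * Real.cos η))^m * Real.cos η * Real.sin η))
      volume 0 (Real.pi/2) :=
    (continuous_const.mul (((hA.pow _).mul Real.continuous_cos).mul
      Real.continuous_sin)).intervalIntegrable _ _
  have hsum : F (m+2) θ + mu m * F m θ
      = ∫ η in (0:ℝ)..(Real.pi/2),
          ((Real.arccos (Real.cos θ * Real.cos η))^(m+2)
            + mu m * (Real.arccos (Real.cos θ * Real.cos η))^m)
            * Real.cos η * Real.sin η := by
    rw [F, F, ← intervalIntegral.integral_const_mul,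
        ← intervalIntegral.integral_add hint1 hint2]
    congr 1
    ext η
    ring
  have hc2 : Real.cos θ ^ 2 ≠ 0 := by positivity
  rw [hsum, E, ← hFTC, mul_comm, mul_div_assoc, div_self hc2, mul_one]

end MomentAux

namespace MomentAux

noncomputable def Phi (m : ℕ) (b : ℝ) : ℝ :=
  (1/4) * (((Real.pi/2)^(m+2) - b^(m+2)) * Real.tan b) + b^(m+3)/(2*((m:ℝ)+3))

lemma Phi_deriv (m : ℕ) {b : ℝ} (hb : Real.cos b ≠ 0) :
    HasDerivAt (Phi m) (E m b) b := by
  have hpow : HasDerivAt (fun b : ℝ => (Real.pi/2)^(m+2) - b^(m+2))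
      (-(((m:ℝ)+2) * b^(m+1))) b := by
    simpa using (hasDerivAt_pow (m+2) b).const_sub ((Real.pi/2)^(m+2))
  have htan : HasDerivAt Real.tan (1 / Real.cos b ^ 2) b := Real.hasDerivAt_tan hb
  have hp3 : HasDerivAt (fun b : ℝ => b^(m+3)/(2*((m:ℝ)+3)))
      ((((m:ℝ)+3) * b^(m+2))/(2*((m:ℝ)+3))) b := by
    simpa using (hasDerivAt_pow (m+3) b).div_const (2*((m:ℝ)+3))
  have h := (((hpow.mul htan).const_mul (1/4:ℝ)).add hp3)
  convert h using 1
  · rfl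
  · rfl
  · rfl
  have hm3 : ((m:ℝ)+3) ≠ 0 := by positivity
  rw [E, psi, Real.tan_eq_sin_div_cos, Real.cos_two_mul, Real.sin_two_mul]
  field_simp
  ring

lemma Phi_FTC (m : ℕ) {b : ℝ} (hb0 : 0 ≤ b) (hb : b < Real.pi/2) :
    ∫ θ in (0:ℝ)..b, E m θ = Phi m b := by
  have hπ := Real.pi_pos
  have hcosne : ∀ x ∈ Set.uIcc (0:ℝ) b, Real.cos x ≠ 0 := by
    intro x hx
    rw [Set.uIcc_of_le hb0] at hx
    exact ne_of_gt (Real.cos_pos_of_mem_Ioo ⟨by linarith [hx.1], by linarith [hx.2]⟩)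
  have hcont : ContinuousOn (E m) (Set.uIcc (0:ℝ) b) := by
    apply ContinuousOn.div
    · exact (continuous_const.sub (by unfold psi; fun_prop : Continuous (psi m))).continuousOn
    · exact (Real.continuous_cos.pow 2).continuousOn
    · intro x hx; exact pow_ne_zero 2 (hcosne x hx)
  have := intervalIntegral.integral_eq_sub_of_hasDerivAt
    (f := Phi m) (f' := E m) (a := (0:ℝ)) (b := b)
    (fun x hx => Phi_deriv m (hcosne x hx))
    (hcont.intervalIntegrable)
  rw [this]
  have : Phi m 0 = 0 := by simp [Phi]
  rw [this, sub_zero]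

end MomentAux

namespace MomentAux

lemma tendsto_Phi (m : ℕ) :
    Filter.Tendsto (Phi m) (nhdsWithin (Real.pi/2) (Set.Iio (Real.pi/2)))
      (nhds (((m:ℝ)+2)/4 * (Real.pi/2)^(m+1) + (Real.pi/2)^(m+3)/(2*((m:ℝ)+3)))) := by
  have hπ := Real.pi_pos
  set c : ℝ := Real.pi/2 with hc
  set f : ℝ → ℝ := fun b => ((Real.pi/2)^(m+2) - b^(m+2)) * Real.sin b with hf
  have hfc : f c = 0 := by simp [hf, hc]
  have hgc : Real.cos c = 0 := Real.cos_pi_div_two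
  have hfd : HasDerivAt f (-(((m:ℝ)+2) * c^(m+1))) c := by
    have h1 : HasDerivAt (fun b : ℝ => (Real.pi/2)^(m+2) - b^(m+2))
        (-(((m:ℝ)+2) * c^(m+1))) c := by
      simpa using (hasDerivAt_pow (m+2) c).const_sub ((Real.pi/2)^(m+2))
    have := h1.mul (Real.hasDerivAt_sin c)
    convert this using 1
    · rfl
    · rfl
    · rfl
    rw [hc]
    simp
  have hgd : HasDerivAt Real.cos (-1 : ℝ) c := by
    simpa [hc] using Real.hasDerivAt_cos c
  have hslopef := hasDerivAt_iff_tendsto_slope.mp hfd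
  have hslopeg := hasDerivAt_iff_tendsto_slope.mp hgd
  have hdiv := hslopef.div hslopeg (by norm_num : (-1:ℝ) ≠ 0)
  have hmono : nhdsWithin c (Set.Iio c) ≤ nhdsWithin c {c}ᶜ :=
    nhdsWithin_mono c (fun x hx => ne_of_lt hx)
  have hdiv' : Filter.Tendsto (fun b => f b / Real.cos b)
      (nhdsWithin c (Set.Iio c)) (nhds (((m:ℝ)+2) * c^(m+1))) := by
    have h2 := hdiv.mono_left hmono
    rw [show -((( m:ℝ)+2) * c^(m+1)) / -1 = ((m:ℝ)+2) * c^(m+1) by ring] at h2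
    apply h2.congr'
    filter_upwards [self_mem_nhdsWithin] with b hb
    have hbne : b - c ≠ 0 := sub_ne_zero.mpr (ne_of_lt hb)
    rw [Pi.div_apply, slope_def_field, slope_def_field, hfc, hgc, sub_zero, sub_zero,
      div_div_div_cancel_right₀ hbne]
  -- limit equals (m+2)*c^(m+1) / ... combine
  have hrest : Filter.Tendsto (fun b : ℝ => b^(m+3)/(2*((m:ℝ)+3)))
      (nhdsWithin c (Set.Iio c)) (nhds (c^(m+3)/(2*((m:ℝ)+3)))) :=
    ((continuous_pow (m+3)).tendsto c).mono_left nhdsWithin_le_nhds |>.div_const _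
  have hfinal := (hdiv'.const_mul (1/4:ℝ)).add hrest
  have heq : ∀ b : ℝ, (1/4) * (f b / Real.cos b) + b^(m+3)/(2*((m:ℝ)+3)) = Phi m b := by
    intro b
    rw [Phi, Real.tan_eq_sin_div_cos, hf]
    ring
  have : (1/4) * (((m:ℝ)+2) * c^(m+1)) + c^(m+3)/(2*((m:ℝ)+3))
      = ((m:ℝ)+2)/4 * (Real.pi/2)^(m+1) + (Real.pi/2)^(m+3)/(2*((m:ℝ)+3)) := by
    rw [hc]; ring
  rw [← this]
  exact hfinal.congr heq

end MomentAux

namespace MomentAux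

lemma integral_G (m : ℕ) :
    (∫ θ in (0:ℝ)..(Real.pi/2), (F (m+2) θ + mu m * F m θ))
      = ((m:ℝ)+2)/4 * (Real.pi/2)^(m+1) + (Real.pi/2)^(m+3)/(2*((m:ℝ)+3)) := by
  have hπ := Real.pi_pos
  have hG : Continuous (fun θ => F (m+2) θ + mu m * F m θ) :=
    (contF _).add (continuous_const.mul (contF m))
  have h1 : Filter.Tendsto (fun b => ∫ θ in (0:ℝ)..b, (F (m+2) θ + mu m * F m θ))
      (nhdsWithin (Real.pi/2) (Set.Iio (Real.pi/2)))
      (nhds (∫ θ in (0:ℝ)..(Real.pi/2), (F (m+2) θ + mu m * F m θ))) :=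
    ((intervalIntegral.continuous_primitive
        (fun a b => hG.intervalIntegrable a b) 0).tendsto _).mono_left nhdsWithin_le_nhds
  have h2 : ∀ᶠ b in nhdsWithin (Real.pi/2) (Set.Iio (Real.pi/2)),
      (∫ θ in (0:ℝ)..b, (F (m+2) θ + mu m * F m θ)) = Phi m b := by
    filter_upwards [Ioo_mem_nhdsLT_of_mem
      (show Real.pi/2 ∈ Set.Ioc (0:ℝ) (Real.pi/2) from ⟨by linarith, le_refl _⟩)] with b hb
    have hb0 : 0 < b := hb.1
    have hb1 : b < Real.pi/2 := hb.2
    have hcongr : (∫ θ in (0:ℝ)..b, (F (m+2) θ + mu m * F m θ))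
        = ∫ θ in (0:ℝ)..b, E m θ := by
      apply intervalIntegral.integral_congr_ae
      apply Filter.Eventually.of_forall
      intro θ hθ
      rw [Set.uIoc_of_le (le_of_lt hb0)] at hθ
      exact G_eq m hθ.1 (lt_of_le_of_lt hθ.2 hb1)
    rw [hcongr, Phi_FTC m (le_of_lt hb0) hb1]
  have h3 := (tendsto_Phi m).congr' (h2.mono fun b hb => hb.symm)
  exact tendsto_nhds_unique h1 h3

lemma key (m : ℕ) :
    momentI 2 (m+2) + mu m * momentI 2 m
      = ((m:ℝ)+2)/Real.pi * (Real.pi/2)^(m+1) + (1/((m:ℝ)+3)) * (Real.pi/2)^(m+2) := by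
  have hπ : Real.pi ≠ 0 := Real.pi_ne_zero
  rw [momentI_eq, momentI_eq]
  have hadd : (∫ θ in (0:ℝ)..(Real.pi/2), F (m+2) θ)
      + mu m * (∫ θ in (0:ℝ)..(Real.pi/2), F m θ)
      = ∫ θ in (0:ℝ)..(Real.pi/2), (F (m+2) θ + mu m * F m θ) := by
    rw [← intervalIntegral.integral_const_mul,
      ← intervalIntegral.integral_add ((contF _).intervalIntegrable _ _)
        (show IntervalIntegrable (fun x => mu m * F m x) volume _ _ from
          (continuous_const.mul (contF m)).intervalIntegrable _ _)]
  rw [show (4/Real.pi) * (∫ θ in (0:ℝ)..(Real.pi/2), F (m+2) θ)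
      + mu m * ((4/Real.pi) * ∫ θ in (0:ℝ)..(Real.pi/2), F m θ)
      = (4/Real.pi) * ((∫ θ in (0:ℝ)..(Real.pi/2), F (m+2) θ)
        + mu m * ∫ θ in (0:ℝ)..(Real.pi/2), F m θ) from by ring]
  rw [hadd, integral_G m]
  have hm3 : ((m:ℝ)+3) ≠ 0 := by positivity
  field_simp
  ring

end MomentAux

theorem moment_recurrence_RP3 (k : ℕ) (hk : 2 ≤ k) :
    momentI 2 k =
      -((k : ℝ) * ((k : ℝ) - 1) / 4) * momentI 2 (k - 2)
        + (1 / ((k : ℝ) + 1)) * (Real.pi / 2) ^ k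
        + ((k : ℝ) / Real.pi) * (Real.pi / 2) ^ (k - 1) := by
  obtain ⟨m, rfl⟩ : ∃ m, k = m + 2 := ⟨k - 2, by omega⟩
  have h := MomentAux.key m
  rw [MomentAux.mu] at h
  have h2 : (m + 2 : ℕ) - 2 = m := by omega
  have h1 : (m + 2 : ℕ) - 1 = m + 1 := by omega
  rw [h2, h1]
  have hc : ((m + 2 : ℕ) : ℝ) = (m:ℝ) + 2 := by push_cast; ring
  rw [hc]
  linear_combination h
end

section
/- For every fixed integer n ≥ 3, the k-th moment of distance satisfies the asymptotic I(n,k) ~ (n/k²) · (π/2)^{k+1} · tan(π/n) as k → ∞; that is, the ratio I(n,k) / ( (n/k²) · (π/2)^{k+1} · tan(π/n) ) tends to 1 as k → ∞. -/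
open MeasureTheory

open Real intervalIntegral Filter

set_option maxHeartbeats 2000000

lemma cov (k : ℕ) (c : ℝ) (hc0 : 0 < c) (hc1 : c < 1) :
    (∫ η in (0:ℝ)..(π/2), Real.arccos (c * Real.cos η) ^ k * Real.cos η * Real.sin η)
      = (1 / c ^ 2) * ∫ s in Real.arccos c..(π/2), s ^ k * Real.sin s * Real.cos s := by
  have hD : ∀ x : ℝ, 0 < 1 - (c * Real.cos x) ^ 2 := by
    intro x
    have h1 : |c * Real.cos x| < 1 := by
      rw [abs_mul]
      calc |c| * |Real.cos x| ≤ |c| * 1 :=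
            mul_le_mul_of_nonneg_left (abs_cos_le_one x) (abs_nonneg c)
        _ < 1 := by rwa [mul_one, abs_of_pos hc0]
    nlinarith [sq_abs (c * Real.cos x), abs_nonneg (c * Real.cos x)]
  have key := intervalIntegral.integral_comp_smul_deriv
    (f := fun η => Real.arccos (c * Real.cos η))
    (f' := fun η => c * Real.sin η / Real.sqrt (1 - (c * Real.cos η) ^ 2))
    (g := fun s => (s ^ k * Real.sin s * Real.cos s) / c ^ 2)
    (a := (0:ℝ)) (b := π/2)
    (fun x _ => by
      have h1 : c * Real.cos x ≠ -1 := by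
        have := hD x; intro h; rw [h] at this; norm_num at this
      have h2 : c * Real.cos x ≠ 1 := by
        have := hD x; intro h; rw [h] at this; norm_num at this
      have h := (Real.hasDerivAt_arccos h1 h2).comp x
        ((Real.hasDerivAt_cos x).const_mul c)
      refine h.congr_deriv ?_
      ring)
    (by
      apply ContinuousOn.div
      · exact (continuous_const.mul Real.continuous_sin).continuousOn
      · exact (Real.continuous_sqrt.comp (by continuity)).continuousOn
      · intro x _
        exact (Real.sqrt_pos.2 (hD x)).ne')
    (by continuity)
  have ptwise : ∀ x ∈ Set.uIcc (0:ℝ) (π/2),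
      Real.arccos (c * Real.cos x) ^ k * Real.cos x * Real.sin x
        = (c * Real.sin x / Real.sqrt (1 - (c * Real.cos x) ^ 2)) •
            (((fun s => (s ^ k * Real.sin s * Real.cos s) / c ^ 2) ∘
              fun η => Real.arccos (c * Real.cos η)) x) := by
    intro x _
    have hD' := hD x
    have hs : Real.sin (Real.arccos (c * Real.cos x))
        = Real.sqrt (1 - (c * Real.cos x) ^ 2) := Real.sin_arccos _
    have hcc : Real.cos (Real.arccos (c * Real.cos x)) = c * Real.cos x := by
      apply Real.cos_arccos <;> nlinarith [sq_nonneg (c * Real.cos x + 1), sq_nonneg (c * Real.cos x - 1)]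
    simp only [Function.comp, smul_eq_mul]
    rw [hs, hcc]
    have hsq : Real.sqrt (1 - (c * Real.cos x) ^ 2) ≠ 0 := (Real.sqrt_pos.2 hD').ne'
    field_simp
    have hsq' : √(1 - c ^ 2 * Real.cos x ^ 2) ≠ 0 := by
      rwa [show c ^ 2 * Real.cos x ^ 2 = (c * Real.cos x) ^ 2 by ring]
    rw [mul_div_assoc, div_self hsq', mul_one]
  calc (∫ η in (0:ℝ)..(π/2), Real.arccos (c * Real.cos η) ^ k * Real.cos η * Real.sin η)
      = ∫ x in (0:ℝ)..(π/2),
          (fun η => c * Real.sin η / Real.sqrt (1 - (c * Real.cos η) ^ 2)) x •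
            (((fun s => (s ^ k * Real.sin s * Real.cos s) / c ^ 2) ∘
              fun η => Real.arccos (c * Real.cos η)) x) :=
        intervalIntegral.integral_congr (fun x hx => ptwise x hx)
    _ = ∫ s in Real.arccos (c * Real.cos 0)..Real.arccos (c * Real.cos (π/2)),
          (s ^ k * Real.sin s * Real.cos s) / c ^ 2 := key
    _ = (1 / c ^ 2) * ∫ s in Real.arccos c..(π/2), s ^ k * Real.sin s * Real.cos s := by
        rw [show Real.arccos (c * Real.cos 0) = Real.arccos c by norm_num,
          show Real.arccos (c * Real.cos (π/2)) = π/2 by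
            rw [Real.cos_pi_div_two, mul_zero, Real.arccos_zero],
          ← intervalIntegral.integral_const_mul]
        apply intervalIntegral.integral_congr
        intro x _
        show x ^ k * Real.sin x * Real.cos x / c ^ 2
          = 1 / c ^ 2 * (x ^ k * Real.sin x * Real.cos x)
        ring

noncomputable def auxG (m : ℕ) (x : ℝ) : ℝ := ∫ s in x..(π/2), s ^ m * Real.sin (2*s)
noncomputable def auxF (k : ℕ) (x : ℝ) : ℝ := ∫ s in x..(π/2), s ^ k * Real.sin s * Real.cos s

lemma auxF_eq (k : ℕ) (x : ℝ) : auxF k x = auxG k x / 2 := by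
  unfold auxF auxG
  rw [← intervalIntegral.integral_div]
  apply intervalIntegral.integral_congr
  intro s _
  show s ^ k * Real.sin s * Real.cos s = s ^ k * Real.sin (2*s) / 2
  rw [Real.sin_two_mul]
  ring

lemma hd_lin (s : ℝ) : HasDerivAt (fun t : ℝ => 2*t) 2 s := by
  simpa using (hasDerivAt_id s).const_mul (2:ℝ)

lemma hd_sin (s : ℝ) : HasDerivAt (fun t => Real.sin (2*t)) (2 * Real.cos (2*s)) s := by
  have h := (hd_lin s).sin
  convert h using 1
  ring

lemma hd_cos (s : ℝ) : HasDerivAt (fun t => Real.cos (2*t)) (-(2 * Real.sin (2*s))) s := by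
  have h := (hd_lin s).cos
  convert h using 1
  ring

lemma hd_pow (m : ℕ) (s : ℝ) :
    HasDerivAt (fun t : ℝ => t ^ (m+1) / (m+1)) (s ^ m) s := by
  have := (hasDerivAt_pow (m+1) s).div_const ((m:ℝ)+1)
  refine this.congr_deriv ?_
  have hm : ((m:ℝ)+1) ≠ 0 := by positivity
  push_cast
  field_simp

lemma ibp_sin (m : ℕ) (x : ℝ) :
    (∫ s in x..(π/2), s ^ m * Real.sin (2*s))
      = -(Real.sin (2*x) * x ^ (m+1) / ((m:ℝ)+1))
        - (2/((m:ℝ)+1)) * ∫ s in x..(π/2), s ^ (m+1) * Real.cos (2*s) := by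
  have h := intervalIntegral.integral_mul_deriv_eq_deriv_mul
    (u := fun s => Real.sin (2*s)) (u' := fun s => 2 * Real.cos (2*s))
    (v := fun s => s ^ (m+1) / ((m:ℝ)+1)) (v' := fun s => s ^ m)
    (a := x) (b := π/2)
    (fun s _ => hd_sin s) (fun s _ => hd_pow m s)
    (by apply Continuous.intervalIntegrable; continuity)
    (by apply Continuous.intervalIntegrable; continuity)
  have h1 : (∫ s in x..(π/2), s ^ m * Real.sin (2*s))
      = ∫ s in x..(π/2), Real.sin (2*s) * s ^ m := by
    apply intervalIntegral.integral_congr; intro s _; ring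
  have h2 : Real.sin (2*(π/2)) = 0 := by
    rw [show 2*(π/2) = π by ring, Real.sin_pi]
  rw [h1, h]
  beta_reduce
  rw [h2]
  rw [show (∫ s in x..(π/2), 2 * Real.cos (2*s) * (s ^ (m+1) / ((m:ℝ)+1)))
      = (2/((m:ℝ)+1)) * ∫ s in x..(π/2), s ^ (m+1) * Real.cos (2*s) by
    rw [← intervalIntegral.integral_const_mul]
    apply intervalIntegral.integral_congr; intro s _; ring]
  ring

lemma ibp_cos (m : ℕ) (x : ℝ) :
    (∫ s in x..(π/2), s ^ m * Real.cos (2*s))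
      = -((π/2) ^ (m+1) / ((m:ℝ)+1)) - Real.cos (2*x) * x ^ (m+1) / ((m:ℝ)+1)
        + (2/((m:ℝ)+1)) * ∫ s in x..(π/2), s ^ (m+1) * Real.sin (2*s) := by
  have h := intervalIntegral.integral_mul_deriv_eq_deriv_mul
    (u := fun s => Real.cos (2*s)) (u' := fun s => -(2 * Real.sin (2*s)))
    (v := fun s => s ^ (m+1) / ((m:ℝ)+1)) (v' := fun s => s ^ m)
    (a := x) (b := π/2)
    (fun s _ => hd_cos s) (fun s _ => hd_pow m s)
    (by apply Continuous.intervalIntegrable; continuity)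
    (by apply Continuous.intervalIntegrable; continuity)
  have h1 : (∫ s in x..(π/2), s ^ m * Real.cos (2*s))
      = ∫ s in x..(π/2), Real.cos (2*s) * s ^ m := by
    apply intervalIntegral.integral_congr; intro s _; ring
  have h2 : Real.cos (2*(π/2)) = -1 := by
    rw [show 2*(π/2) = π by ring, Real.cos_pi]
  rw [h1, h]
  beta_reduce
  rw [h2]
  rw [show (∫ s in x..(π/2), -(2 * Real.sin (2*s)) * (s ^ (m+1) / ((m:ℝ)+1)))
      = -((2/((m:ℝ)+1)) * ∫ s in x..(π/2), s ^ (m+1) * Real.sin (2*s)) by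
    rw [← intervalIntegral.integral_const_mul, ← intervalIntegral.integral_neg]
    apply intervalIntegral.integral_congr; intro s _; ring]
  ring

lemma auxG_id (k : ℕ) (x : ℝ) :
    auxG k x = 2*(π/2) ^ (k+2)/(((k:ℝ)+1)*((k:ℝ)+2))
      - Real.sin (2*x) * x ^ (k+1)/((k:ℝ)+1)
      + 2*Real.cos (2*x) * x ^ (k+2)/(((k:ℝ)+1)*((k:ℝ)+2))
      - (4/(((k:ℝ)+1)*((k:ℝ)+2))) * auxG (k+2) x := by
  have h1 := ibp_sin k x
  have h2 := ibp_cos (k+1) x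
  unfold auxG
  push_cast at h1 h2 ⊢
  rw [show k+1+1 = k+2 by ring] at h2
  rw [h1, h2]
  have hk1 : ((k:ℝ)+1) ≠ 0 := by positivity
  have hk2 : ((k:ℝ)+2) ≠ 0 := by positivity
  field_simp
  ring

lemma auxG_bound (m : ℕ) (x : ℝ) (hx : 0 ≤ x) (hx2 : x ≤ π/2) :
    |auxG m x| ≤ (π/2) ^ (m+1) / ((m:ℝ)+1) := by
  have h : |auxG m x| ≤ |∫ s in x..(π/2), s ^ m| := by
    rw [← Real.norm_eq_abs (auxG m x)]
    apply intervalIntegral.norm_integral_le_abs_of_norm_le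
    · refine Filter.Eventually.mono (ae_restrict_mem measurableSet_uIoc) (fun s hs => ?_)
      rw [Set.uIoc_of_le hx2] at hs
      have hs0 : 0 ≤ s := le_trans hx hs.1.le
      have : ‖s ^ m * Real.sin (2*s)‖ = s ^ m * |Real.sin (2*s)| := by
        rw [norm_mul, norm_pow, Real.norm_eq_abs, Real.norm_eq_abs, abs_of_nonneg hs0]
      rw [this]
      calc s ^ m * |Real.sin (2*s)| ≤ s ^ m * 1 := by
            apply mul_le_mul_of_nonneg_left (Real.abs_sin_le_one _) (by positivity)
        _ = s ^ m := mul_one _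
    · apply Continuous.intervalIntegrable; continuity
  rw [integral_pow] at h
  refine h.trans ?_
  have hxp : x ^ (m+1) ≤ (π/2) ^ (m+1) := pow_le_pow_left₀ hx hx2 _
  have hx0 : 0 ≤ x ^ (m+1) := by positivity
  rw [abs_div, abs_of_nonneg (by linarith : (0:ℝ) ≤ (π/2)^(m+1) - x^(m+1))]
  have : |((m:ℝ)+1)| = (m:ℝ)+1 := abs_of_pos (by positivity)
  rw [this]
  gcongr
  linarith

lemma main_lim : Tendsto (fun k : ℕ => (k:ℝ)^2/(((k:ℝ)+1)*((k:ℝ)+2))) atTop (nhds 1) := by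
  have h1 := tendsto_natCast_div_add_atTop (𝕜 := ℝ) 1
  have h2 := tendsto_natCast_div_add_atTop (𝕜 := ℝ) 2
  have h := h1.mul h2
  rw [mul_one] at h
  apply h.congr
  intro k
  rw [div_mul_div_comm]
  ring_nf

lemma pow_geom_lim (r : ℝ) (h0 : 0 ≤ r) (h1 : r < 1) :
    Tendsto (fun k : ℕ => (k:ℝ)^2 * r^(k+1)) atTop (nhds 0) := by
  have h := tendsto_pow_const_mul_const_pow_of_abs_lt_one 2 (by rwa [abs_of_nonneg h0] : |r| < 1)
  have h2 := h.mul_const r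
  rw [zero_mul] at h2
  apply h2.congr
  intro k
  rw [pow_succ]
  ring

lemma inv_lim : Tendsto (fun k : ℕ => π/((k:ℝ)+1)) atTop (nhds 0) :=
  Tendsto.div_atTop tendsto_const_nhds
    (tendsto_atTop_add_const_right _ 1 tendsto_natCast_atTop_atTop)

lemma auxA_lim (a : ℝ) (ha0 : 0 < a) (ha : a < π/2) :
    Tendsto (fun k : ℕ => (k:ℝ)^2 * auxF k a / (π/2)^(k+2)) atTop (nhds 1) := by
  have hb : (0:ℝ) < π/2 := by positivity
  have hpi := Real.pi_gt_three
  set r : ℝ := a / (π/2) with hr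
  have hra : r * (π/2) = a := div_mul_cancel₀ a hb.ne'
  have hr0 : 0 ≤ r := by positivity
  have hr1 : r < 1 := (div_lt_one hb).2 ha
  have key : ∀ k : ℕ, |(k:ℝ)^2 * auxF k a / (π/2)^(k+2) - (k:ℝ)^2/(((k:ℝ)+1)*((k:ℝ)+2))|
      ≤ 2*((k:ℝ)^2 * r^(k+1)) + π/((k:ℝ)+1) := by
    intro k
    have hk0 : (0:ℝ) ≤ (k:ℝ) := Nat.cast_nonneg k
    have hk1 : (0:ℝ) < (k:ℝ)+1 := by positivity
    have hk2 : (0:ℝ) < (k:ℝ)+2 := by positivity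
    have hk3 : (0:ℝ) < (k:ℝ)+3 := by positivity
    have hX : (0:ℝ) < (π/2)^(k+1) := by positivity
    have hP : (0:ℝ) < (π/2)^(k+2) := by positivity
    have hY : (0:ℝ) ≤ r^(k+1) := by positivity
    have hXa : a^(k+1) = r^(k+1) * (π/2)^(k+1) := by rw [← mul_pow, hra]
    set T1 : ℝ := Real.sin (2*a) * a ^ (k+1)/((k:ℝ)+1) with hT1
    set T2 : ℝ := 2*Real.cos (2*a) * a ^ (k+2)/(((k:ℝ)+1)*((k:ℝ)+2)) with hT2
    set T3 : ℝ := (4/(((k:ℝ)+1)*((k:ℝ)+2))) * auxG (k+2) a with hT3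
    have e1 : (k:ℝ)^2 * auxF k a / (π/2)^(k+2) - (k:ℝ)^2/(((k:ℝ)+1)*((k:ℝ)+2))
        = ((k:ℝ)^2/(2*(π/2)^(k+2))) * (-T1 + T2 - T3) := by
      rw [hT1, hT2, hT3, auxF_eq, auxG_id]
      field_simp
      ring
    have hGb : |auxG (k+2) a| ≤ (π/2)^(k+3)/((k:ℝ)+3) := by
      have h := auxG_bound (k+2) a ha0.le ha.le
      have hc : ((k+2:ℕ):ℝ)+1 = (k:ℝ)+3 := by push_cast; ring
      rw [hc] at h
      exact h
    have hb1 : |T1| ≤ a^(k+1)/((k:ℝ)+1) := by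
      rw [hT1, abs_div, abs_of_pos hk1, abs_mul,
        abs_of_nonneg (pow_nonneg ha0.le (k+1))]
      calc |Real.sin (2*a)| * a^(k+1) / ((k:ℝ)+1)
          ≤ 1 * a^(k+1) / ((k:ℝ)+1) := by
            gcongr
            exact Real.abs_sin_le_one _
        _ = a^(k+1)/((k:ℝ)+1) := by ring
    have hb2 : |T2| ≤ 2*a^(k+2)/(((k:ℝ)+1)*((k:ℝ)+2)) := by
      rw [hT2, abs_div, abs_of_pos (mul_pos hk1 hk2), abs_mul, abs_mul,
        abs_of_nonneg (by norm_num : (0:ℝ) ≤ 2),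
        abs_of_nonneg (pow_nonneg ha0.le (k+2))]
      calc 2 * |Real.cos (2*a)| * a^(k+2) / (((k:ℝ)+1)*((k:ℝ)+2))
          ≤ 2 * 1 * a^(k+2) / (((k:ℝ)+1)*((k:ℝ)+2)) := by
            gcongr
            exact Real.abs_cos_le_one _
        _ = 2*a^(k+2)/(((k:ℝ)+1)*((k:ℝ)+2)) := by ring
    have hb3 : |T3| ≤ (4/(((k:ℝ)+1)*((k:ℝ)+2))) * ((π/2)^(k+3)/((k:ℝ)+3)) := by
      rw [hT3, abs_mul, abs_of_pos (by positivity : (0:ℝ) < 4/(((k:ℝ)+1)*((k:ℝ)+2)))]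
      gcongr
    have htri : |(-T1 + T2 - T3)| ≤ |T1| + |T2| + |T3| := by
      calc |(-T1 + T2 - T3)| ≤ |(-T1 + T2)| + |T3| := abs_sub _ _
        _ ≤ |T1| + |T2| + |T3| := by
            have h := abs_add_le (-T1) T2
            rw [abs_neg] at h
            linarith
    have hC : (0:ℝ) ≤ (k:ℝ)^2/(2*(π/2)^(k+2)) := by positivity
    have step1 : |(k:ℝ)^2 * auxF k a / (π/2)^(k+2) - (k:ℝ)^2/(((k:ℝ)+1)*((k:ℝ)+2))|
        ≤ ((k:ℝ)^2/(2*(π/2)^(k+2))) *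
            (a^(k+1)/((k:ℝ)+1) + 2*a^(k+2)/(((k:ℝ)+1)*((k:ℝ)+2))
              + (4/(((k:ℝ)+1)*((k:ℝ)+2))) * ((π/2)^(k+3)/((k:ℝ)+3))) := by
      rw [e1, abs_mul, abs_of_nonneg hC]
      apply mul_le_mul_of_nonneg_left _ hC
      linarith
    refine step1.trans ?_
    have eb1 : ((k:ℝ)^2/(2*(π/2)^(k+2))) * (a^(k+1)/((k:ℝ)+1))
        = (k:ℝ)^2*r^(k+1)/(π*((k:ℝ)+1)) := by
      rw [hXa, pow_succ]
      field_simp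
      ring
    have eb2 : ((k:ℝ)^2/(2*(π/2)^(k+2))) * (2*a^(k+2)/(((k:ℝ)+1)*((k:ℝ)+2)))
        = 2*a*((k:ℝ)^2*r^(k+1))/(π*(((k:ℝ)+1)*((k:ℝ)+2))) := by
      rw [show k+2 = (k+1)+1 by ring, pow_succ a, hXa, pow_succ (π/2)]
      field_simp
    have eb3 : ((k:ℝ)^2/(2*(π/2)^(k+2))) *
          ((4/(((k:ℝ)+1)*((k:ℝ)+2))) * ((π/2)^(k+3)/((k:ℝ)+3)))
        = π*(k:ℝ)^2/(((k:ℝ)+1)*((k:ℝ)+2)*((k:ℝ)+3)) := by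
      rw [show k+3 = (k+2)+1 by ring, pow_succ (π/2) (k+2)]
      field_simp
      ring
    have ib1 : (k:ℝ)^2*r^(k+1)/(π*((k:ℝ)+1)) ≤ (k:ℝ)^2*r^(k+1) := by
      apply div_le_self (by positivity)
      nlinarith
    have ib2 : 2*a*((k:ℝ)^2*r^(k+1))/(π*(((k:ℝ)+1)*((k:ℝ)+2))) ≤ (k:ℝ)^2*r^(k+1) := by
      rw [div_le_iff₀ (by positivity)]
      have h2a : 2*a ≤ π := by linarith
      have hnn : (0:ℝ) ≤ (k:ℝ)^2*r^(k+1) := by positivity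
      nlinarith [mul_le_mul_of_nonneg_right h2a hnn,
        mul_le_mul_of_nonneg_left (by nlinarith : (1:ℝ) ≤ ((k:ℝ)+1)*((k:ℝ)+2))
          (by positivity : (0:ℝ) ≤ π*((k:ℝ)^2*r^(k+1)))]
    have ib3 : π*(k:ℝ)^2/(((k:ℝ)+1)*((k:ℝ)+2)*((k:ℝ)+3)) ≤ π/((k:ℝ)+1) := by
      rw [div_le_div_iff₀ (by positivity) hk1]
      have hkk : (k:ℝ)^2 ≤ ((k:ℝ)+2)*((k:ℝ)+3) := by nlinarith
      nlinarith [mul_le_mul_of_nonneg_left hkk (by positivity : (0:ℝ) ≤ π*((k:ℝ)+1))]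
    calc ((k:ℝ)^2/(2*(π/2)^(k+2))) *
            (a^(k+1)/((k:ℝ)+1) + 2*a^(k+2)/(((k:ℝ)+1)*((k:ℝ)+2))
              + (4/(((k:ℝ)+1)*((k:ℝ)+2))) * ((π/2)^(k+3)/((k:ℝ)+3)))
        = (k:ℝ)^2*r^(k+1)/(π*((k:ℝ)+1))
          + 2*a*((k:ℝ)^2*r^(k+1))/(π*(((k:ℝ)+1)*((k:ℝ)+2)))
          + π*(k:ℝ)^2/(((k:ℝ)+1)*((k:ℝ)+2)*((k:ℝ)+3)) := by
          rw [← eb1, ← eb2, ← eb3]; ring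
      _ ≤ 2*((k:ℝ)^2 * r^(k+1)) + π/((k:ℝ)+1) := by linarith
  have hdiff : Tendsto (fun k : ℕ => (k:ℝ)^2 * auxF k a / (π/2)^(k+2)
      - (k:ℝ)^2/(((k:ℝ)+1)*((k:ℝ)+2))) atTop (nhds 0) := by
    apply squeeze_zero_norm key
    have h1 := (pow_geom_lim r hr0 hr1).const_mul 2
    rw [mul_zero] at h1
    have := h1.add inv_lim
    rw [add_zero] at this
    exact this
  have := hdiff.add main_lim
  rw [zero_add] at this
  apply this.congr
  intro k
  ring

lemma step_M (k : ℕ) (a : ℝ) (ha0 : 0 < a) (ha : a < π/2) :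
    (∫ θ in (-a)..a, ∫ η in (0:ℝ)..(π/2),
        Real.arccos (Real.cos θ * Real.cos η) ^ k * Real.cos η * Real.sin η)
      = ∫ θ in (-a)..a, (1/Real.cos θ ^ 2) * auxF k |θ| := by
  apply intervalIntegral.integral_congr_ae
  have h0 : ∀ᵐ x : ℝ, x ≠ 0 := by
    rw [MeasureTheory.ae_iff]
    have : {x : ℝ | ¬x ≠ 0} = {0} := by ext x; simp
    rw [this]
    exact measure_singleton 0
  filter_upwards [h0] with θ hθ hmem
  have habs : |θ| < π/2 := by
    rw [Set.uIoc_of_le (by linarith : -a ≤ a)] at hmem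
    rw [abs_lt]
    constructor <;> [linarith [hmem.1]; linarith [hmem.2]]
  have hc0 : 0 < Real.cos θ := Real.cos_pos_of_mem_Ioo (by
    constructor
    · linarith [abs_lt.1 habs |>.1]
    · linarith [abs_lt.1 habs |>.2])
  have hc1 : Real.cos θ < 1 := by
    rw [← Real.cos_abs]
    calc Real.cos |θ| < Real.cos 0 := by
          apply Real.cos_lt_cos_of_nonneg_of_le_pi (le_refl 0) ?_ (abs_pos.2 hθ)
          linarith [Real.pi_pos]
      _ = 1 := Real.cos_zero
  rw [cov k (Real.cos θ) hc0 hc1]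
  have harc : Real.arccos (Real.cos θ) = |θ| := by
    rw [← Real.cos_abs, Real.arccos_cos (abs_nonneg θ) (by linarith [Real.pi_pos])]
  rw [harc]
  rfl

lemma integrable_sec (a : ℝ) (ha : a < π/2) (ha0 : 0 < a) :
    IntervalIntegrable (fun θ : ℝ => 1/Real.cos θ ^ 2) volume (-a) a := by
  apply ContinuousOn.intervalIntegrable
  apply ContinuousOn.div continuousOn_const (Real.continuous_cos.pow 2).continuousOn
  intro θ hθ
  rw [Set.uIcc_of_le (by linarith : -a ≤ a)] at hθ
  have : 0 < Real.cos θ := Real.cos_pos_of_mem_Ioo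
    ⟨by linarith [hθ.1], by linarith [hθ.2]⟩
  exact pow_ne_zero _ this.ne'

lemma sec_integral (a : ℝ) (ha0 : 0 < a) (ha : a < π/2) :
    (∫ θ in (-a)..a, 1/Real.cos θ ^ 2) = 2 * Real.tan a := by
  have h := intervalIntegral.integral_eq_sub_of_hasDerivAt
    (f := Real.tan) (f' := fun θ => 1/Real.cos θ ^ 2) (a := -a) (b := a)
    (fun θ hθ => by
      rw [Set.uIcc_of_le (by linarith : -a ≤ a)] at hθ
      have : 0 < Real.cos θ := Real.cos_pos_of_mem_Ioo
        ⟨by linarith [hθ.1], by linarith [hθ.2]⟩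
      exact Real.hasDerivAt_tan this.ne')
    (integrable_sec a ha ha0)
  rw [h, Real.tan_neg]
  ring

lemma gcont (k : ℕ) : Continuous (fun s : ℝ => s ^ k * Real.sin s * Real.cos s) := by
  continuity

lemma auxF_split (k : ℕ) (x y : ℝ) :
    auxF k x = (∫ s in x..y, s ^ k * Real.sin s * Real.cos s) + auxF k y := by
  unfold auxF
  rw [intervalIntegral.integral_add_adjacent_intervals] <;>
    exact (gcont k).intervalIntegrable _ _

lemma auxD_cont (k : ℕ) (y : ℝ) :
    Continuous (fun x : ℝ => ∫ s in x..y, s ^ k * Real.sin s * Real.cos s) := by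
  have h : Continuous (fun x : ℝ => ∫ s in y..x, s ^ k * Real.sin s * Real.cos s) :=
    intervalIntegral.continuous_primitive
      (fun a b => (gcont k).intervalIntegrable a b) y
  have : (fun x : ℝ => ∫ s in x..y, s ^ k * Real.sin s * Real.cos s)
      = fun x => -(∫ s in y..x, s ^ k * Real.sin s * Real.cos s) := by
    funext x
    rw [intervalIntegral.integral_symm]
  rw [this]
  exact h.neg

lemma auxD_bound (k : ℕ) (a : ℝ) (ha0 : 0 < a) (θ : ℝ) (hθ : |θ| ≤ a) :
    |∫ s in |θ|..a, s ^ k * Real.sin s * Real.cos s| ≤ a^(k+1) := by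
  rw [← Real.norm_eq_abs]
  have hb : ∀ s ∈ Set.uIoc |θ| a, ‖s ^ k * Real.sin s * Real.cos s‖ ≤ a^k := by
    intro s hs
    rw [Set.uIoc_of_le hθ] at hs
    have hs0 : 0 ≤ s := le_trans (abs_nonneg θ) hs.1.le
    have hsa : s ≤ a := hs.2
    rw [Real.norm_eq_abs, abs_mul, abs_mul, abs_pow, abs_of_nonneg hs0]
    calc s^k * |Real.sin s| * |Real.cos s| ≤ s^k * 1 * 1 := by
          gcongr
          · exact Real.abs_sin_le_one s
          · exact Real.abs_cos_le_one s
      _ = s^k := by ring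
      _ ≤ a^k := pow_le_pow_left₀ hs0 hsa k
  have h := intervalIntegral.norm_integral_le_of_norm_le_const hb
  calc ‖∫ s in |θ|..a, s ^ k * Real.sin s * Real.cos s‖ ≤ a^k * abs (a - |θ|) := h
    _ ≤ a^k * a := by
        gcongr
        rw [abs_of_nonneg (by linarith [abs_nonneg θ])]
        linarith [abs_nonneg θ]
    _ = a^(k+1) := by rw [pow_succ]

lemma step_E (k : ℕ) (a : ℝ) (ha0 : 0 < a) (ha : a < π/2) :
    |(∫ θ in (-a)..a, (1/Real.cos θ ^ 2) * auxF k |θ|) - 2*Real.tan a*auxF k a|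
      ≤ 2*Real.tan a * a^(k+1) := by
  have hsec := integrable_sec a ha ha0
  have hsplit : ∀ θ : ℝ, (1/Real.cos θ ^ 2) * auxF k |θ|
      = (1/Real.cos θ ^ 2) * auxF k a
        + (1/Real.cos θ ^ 2) * ∫ s in |θ|..a, s ^ k * Real.sin s * Real.cos s := by
    intro θ
    rw [auxF_split k |θ| a]
    ring
  have hDc : Continuous (fun θ : ℝ => ∫ s in |θ|..a, s ^ k * Real.sin s * Real.cos s) :=
    (auxD_cont k a).comp continuous_abs
  have hint2 : IntervalIntegrable
      (fun θ => (1/Real.cos θ ^ 2) * ∫ s in |θ|..a, s ^ k * Real.sin s * Real.cos s)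
      volume (-a) a := hsec.mul_continuousOn hDc.continuousOn
  have hint1 : IntervalIntegrable (fun θ => (1/Real.cos θ ^ 2) * auxF k a)
      volume (-a) a := hsec.mul_const _
  have hLHS : (∫ θ in (-a)..a, (1/Real.cos θ ^ 2) * auxF k |θ|)
      = 2*Real.tan a*auxF k a
        + ∫ θ in (-a)..a,
            (1/Real.cos θ ^ 2) * ∫ s in |θ|..a, s ^ k * Real.sin s * Real.cos s := by
    rw [intervalIntegral.integral_congr (g := fun θ => (1/Real.cos θ ^ 2) * auxF k a
        + (1/Real.cos θ ^ 2) * ∫ s in |θ|..a, s ^ k * Real.sin s * Real.cos s)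
        (fun θ _ => hsplit θ),
      intervalIntegral.integral_add hint1 hint2,
      intervalIntegral.integral_mul_const, sec_integral a ha0 ha]
  rw [hLHS]
  have hred : |2*Real.tan a*auxF k a
      + (∫ θ in (-a)..a,
          (1/Real.cos θ ^ 2) * ∫ s in |θ|..a, s ^ k * Real.sin s * Real.cos s)
      - 2*Real.tan a*auxF k a|
      = |∫ θ in (-a)..a,
          (1/Real.cos θ ^ 2) * ∫ s in |θ|..a, s ^ k * Real.sin s * Real.cos s| := by
    rw [add_sub_cancel_left]
  rw [hred, ← Real.norm_eq_abs]
  have hae : ∀ᵐ t ∂(volume.restrict (Set.uIoc (-a) a)),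
      ‖(1/Real.cos t ^ 2) * ∫ s in |t|..a, s ^ k * Real.sin s * Real.cos s‖
        ≤ (1/Real.cos t ^ 2) * a^(k+1) := by
    refine Filter.Eventually.mono (ae_restrict_mem measurableSet_uIoc) (fun θ hθ => ?_)
    rw [Set.uIoc_of_le (by linarith : -a ≤ a)] at hθ
    have hth : |θ| ≤ a := by
      rw [abs_le]; exact ⟨hθ.1.le, hθ.2⟩
    have hc : 0 < Real.cos θ := Real.cos_pos_of_mem_Ioo
      ⟨by linarith [abs_le.1 hth |>.1], by linarith [abs_le.1 hth |>.2]⟩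
    have hsec2 : (0:ℝ) ≤ 1/Real.cos θ ^ 2 := by positivity
    rw [Real.norm_eq_abs, abs_mul, abs_of_nonneg hsec2]
    exact mul_le_mul_of_nonneg_left (auxD_bound k a ha0 θ hth) hsec2
  have h := intervalIntegral.norm_integral_le_abs_of_norm_le hae (hsec.mul_const _)
  refine h.trans ?_
  rw [intervalIntegral.integral_mul_const, sec_integral a ha0 ha]
  have htan : 0 < Real.tan a := Real.tan_pos_of_pos_of_lt_pi_div_two ha0 ha
  rw [abs_of_nonneg (by positivity)]

theorem moment_asymptotics (n : ℕ) (hn : 3 ≤ n) :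
    Filter.Tendsto
      (fun k : ℕ =>
        momentI n k /
          (((n : ℝ) / (k : ℝ) ^ 2) * (Real.pi / 2) ^ (k + 1) * Real.tan (Real.pi / n)))
      Filter.atTop (nhds 1) := by
  have hnR : (3:ℝ) ≤ (n:ℝ) := by exact_mod_cast hn
  have hn0 : (0:ℝ) < (n:ℝ) := by linarith
  have hpi := Real.pi_gt_three
  have ha0 : 0 < π/(n:ℝ) := by positivity
  have ha : π/(n:ℝ) < π/2 := by
    apply div_lt_div_of_pos_left Real.pi_pos (by norm_num) (by linarith)
  have htan : 0 < Real.tan (π/(n:ℝ)) := Real.tan_pos_of_pos_of_lt_pi_div_two ha0 ha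
  have hb1 : (1:ℝ) < π/2 := by linarith
  set a : ℝ := π/(n:ℝ) with ha_def
  set r : ℝ := a/(π/2) with hr_def
  have hra : r * (π/2) = a := div_mul_cancel₀ a (by positivity)
  have hr0 : 0 ≤ r := by positivity
  have hr1 : r < 1 := (div_lt_one (by positivity)).2 ha
  set M : ℕ → ℝ := fun k => ∫ θ in (-a)..a, (1/Real.cos θ ^ 2) * auxF k |θ| with hM_def
  have hM : ∀ k, momentI n k = ((n:ℝ)^2/(2*π^2)) * ((2*a) * M k) := by
    intro k
    unfold momentI
    rw [intervalIntegral.integral_const, smul_eq_mul, step_M k a ha0 ha]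
    simp only [hM_def]
    ring
  set A : ℕ → ℝ := fun k => (k:ℝ)^2 * auxF k a / (π/2)^(k+2) with hA_def
  set B : ℕ → ℝ := fun k =>
    (k:ℝ)^2 * (M k - 2*Real.tan a*auxF k a) / (2*(π/2)^(k+2)*Real.tan a) with hB_def
  have hA : Tendsto A atTop (nhds 1) := auxA_lim a ha0 ha
  have hB : Tendsto B atTop (nhds 0) := by
    apply squeeze_zero_norm ?_ (pow_geom_lim r hr0 hr1)
    intro k
    have hP : (0:ℝ) < (π/2)^(k+2) := by positivity
    have e : ‖B k‖ = (k:ℝ)^2 * |M k - 2*Real.tan a*auxF k a| / (2*(π/2)^(k+2)*Real.tan a) := by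
      rw [hB_def, Real.norm_eq_abs, abs_div, abs_mul, abs_of_nonneg (by positivity : (0:ℝ) ≤ (k:ℝ)^2),
        abs_of_pos (by positivity : (0:ℝ) < 2*(π/2)^(k+2)*Real.tan a)]
    rw [e]
    calc (k:ℝ)^2 * |M k - 2*Real.tan a*auxF k a| / (2*(π/2)^(k+2)*Real.tan a)
        ≤ (k:ℝ)^2 * (2*Real.tan a * a^(k+1)) / (2*(π/2)^(k+2)*Real.tan a) := by
          gcongr
          exact step_E k a ha0 ha
      _ = (k:ℝ)^2 * r^(k+1) / (π/2) := by
          rw [show a^(k+1) = r^(k+1)*(π/2)^(k+1) by rw [← mul_pow, hra],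
            show (k+2) = (k+1)+1 by ring, pow_succ (π/2) (k+1)]
          field_simp
      _ ≤ (k:ℝ)^2 * r^(k+1) := by
          apply div_le_self (by positivity)
          linarith
  have hfinal : ∀ᶠ k : ℕ in atTop,
      momentI n k /
          (((n : ℝ) / (k : ℝ) ^ 2) * (Real.pi / 2) ^ (k + 1) * Real.tan (Real.pi / n))
        = A k + B k := by
    filter_upwards [eventually_ge_atTop 1] with k hk
    have hk0 : (0:ℝ) < (k:ℝ) := by exact_mod_cast hk
    rw [hM k]
    simp only [hA_def, hB_def, hM_def, ha_def]
    have hPk : (0:ℝ) < (π/2)^(k+1) := by positivity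
    have hPk2 : (0:ℝ) < (π/2)^(k+2) := by positivity
    rw [show ((π:ℝ)/2)^(k+2) = (π/2)^(k+1)*(π/2) by ring]
    field_simp
    have htan' : Real.tan (π / ↑n) ≠ 0 := htan.ne'
    rw [sub_div, show 2 * Real.tan (π / ↑n) * auxF k (π / ↑n) / Real.tan (π / ↑n)
      = 2 * auxF k (π / ↑n) by rw [mul_comm 2, mul_assoc, mul_div_cancel_left₀ _ htan']]
    ring
  have hlim := hA.add hB
  rw [add_zero] at hlim
  exact Tendsto.congr' (by filter_upwards [hfinal] with k h; exact h.symm) hlim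
end
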